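/- arXiv:2207.04421 — 5 statements merged into one kernel-verified Lean document; each statement's English description precedes it below -/
import Mathlib

section
/- The coefficient of x^{n−1} in J_P(x, 1) = Σ_{a ∈ PB} x^{ι(a)} equals Σ_{i ∈ [n]} f({i}) − f([n]); equivalently, the number of bases a ∈ PB with ι(a) = n − 1 is Σ_{i ∈ [n]} f({i}) − f([n]). -/
open Finset

variable {n : ℕ}

/-- The set of bases of the integer polymatroid with rank function `f` on ground set `Fin n`:
integer vectors `a` with `a i ≥ 0`, `∑_{i ∈ I} a i ≤ f I` for every `I`, and `∑ i, a i = f [n]`.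
(The upper bound `a i ≤ f {i}` used for the ambient finite set is implied by the constraints.) -/
noncomputable def PB (n : ℕ) (f : Finset (Fin n) → ℕ) : Finset (Fin n → ℤ) :=
  (Fintype.piFinset fun i : Fin n => Finset.Icc (0 : ℤ) (f {i})).filter fun a =>
    (∀ I : Finset (Fin n), ∑ j ∈ I, a j ≤ (f I : ℤ)) ∧ ∑ j, a j = (f Finset.univ : ℤ)

/-- A set `I` is tight for `a` if `∑_{i ∈ I} a i = f I`. -/
def Tight (f : Finset (Fin n) → ℕ) (a : Fin n → ℤ) (I : Finset (Fin n)) : Prop :=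
  ∑ i ∈ I, a i = (f I : ℤ)

/-- `i` is internally active with respect to `a`: `a - e_i + e_j ∉ PB` for every `j < i`. -/
def IntAct (f : Finset (Fin n) → ℕ) (a : Fin n → ℤ) (i : Fin n) : Prop :=
  ∀ j : Fin n, j < i → a - Pi.single i 1 + Pi.single j 1 ∉ PB n f

/-- `i` is externally active with respect to `a`: `a + e_i - e_j ∉ PB` for every `j < i`. -/
def ExtAct (f : Finset (Fin n) → ℕ) (a : Fin n → ℤ) (i : Fin n) : Prop :=
  ∀ j : Fin n, j < i → a + Pi.single i 1 - Pi.single j 1 ∉ PB n f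

open scoped Classical in
/-- `Int(a)`: the set of internally active indices. -/
noncomputable def IntSet (f : Finset (Fin n) → ℕ) (a : Fin n → ℤ) : Finset (Fin n) :=
  Finset.univ.filter fun i => IntAct f a i

open scoped Classical in
/-- `Ext(a)`: the set of externally active indices. -/
noncomputable def ExtSet (f : Finset (Fin n) → ℕ) (a : Fin n → ℤ) : Finset (Fin n) :=
  Finset.univ.filter fun i => ExtAct f a i

/-- `ι(a) = |Int(a)|`, the internal activity. -/
noncomputable def iota (f : Finset (Fin n) → ℕ) (a : Fin n → ℤ) : ℕ := (IntSet f a).card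

/-- `ε(a) = |Ext(a)|`, the external activity. -/
noncomputable def eps (f : Finset (Fin n) → ℕ) (a : Fin n → ℤ) : ℕ := (ExtSet f a).card

namespace Dev

/-- prefix set -/
def Pre (n k : ℕ) : Finset (Fin n) := univ.filter (fun x => (x : ℕ) < k)

@[simp] lemma mem_Pre {k : ℕ} {x : Fin n} : x ∈ Pre n k ↔ (x : ℕ) < k := by simp [Pre]

lemma Pre_zero : Pre n 0 = ∅ := by ext x; simp

lemma Pre_top : Pre n n = univ := by ext x; simp [x.isLt]

lemma Pre_mono {k l : ℕ} (h : k ≤ l) : Pre n k ⊆ Pre n l := fun x hx => by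
  simp only [mem_Pre] at *; omega

lemma Pre_succ {k : ℕ} (hk : k < n) : Pre n (k+1) = insert ⟨k, hk⟩ (Pre n k) := by
  ext x; simp [Fin.ext_iff]; omega

lemma not_mem_Pre_self {k : ℕ} (hk : k < n) : (⟨k, hk⟩ : Fin n) ∉ Pre n k := by simp

/-- membership in PB, cleaned up -/
lemma mem_PB_iff {f : Finset (Fin n) → ℕ} {a : Fin n → ℤ} :
    a ∈ PB n f ↔ (∀ j, 0 ≤ a j) ∧ (∀ I : Finset (Fin n), ∑ j ∈ I, a j ≤ (f I : ℤ)) ∧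
      ∑ j, a j = (f Finset.univ : ℤ) := by
  simp only [PB, Finset.mem_filter, Fintype.mem_piFinset, Finset.mem_Icc]
  constructor
  · rintro ⟨h1, h2, h3⟩; exact ⟨fun j => (h1 j).1, h2, h3⟩
  · rintro ⟨h1, h2, h3⟩
    refine ⟨fun j => ⟨h1 j, ?_⟩, h2, h3⟩
    have := h2 {j}; simpa using this

section withf

variable {f : Finset (Fin n) → ℕ}

lemma tight_union_inter {a : Fin n → ℤ}
    (hsub : ∀ I J : Finset (Fin n), f (I ∪ J) + f (I ∩ J) ≤ f I + f J)
    (hc : ∀ I : Finset (Fin n), ∑ j ∈ I, a j ≤ (f I : ℤ))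
    {I J : Finset (Fin n)} (hI : Tight f a I) (hJ : Tight f a J) :
    Tight f a (I ∪ J) ∧ Tight f a (I ∩ J) := by
  have hsum : ∑ x ∈ I ∪ J, a x + ∑ x ∈ I ∩ J, a x = ∑ x ∈ I, a x + ∑ x ∈ J, a x :=
    Finset.sum_union_inter
  have h1 := hc (I ∪ J)
  have h2 := hc (I ∩ J)
  have h3 : (f (I ∪ J) : ℤ) + (f (I ∩ J) : ℤ) ≤ (f I : ℤ) + (f J : ℤ) := by
    exact_mod_cast hsub I J
  unfold Tight at *
  constructor <;> linarith

/-- minimal tight set containing j -/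
noncomputable def Dset (f : Finset (Fin n) → ℕ) (a : Fin n → ℤ) (j : Fin n) :
    Finset (Fin n) := by
  classical
  exact ((univ : Finset (Finset (Fin n))).filter (fun I => Tight f a I ∧ j ∈ I)).inf id

lemma Dset_spec {a : Fin n → ℤ}
    (hsub : ∀ I J : Finset (Fin n), f (I ∪ J) + f (I ∩ J) ≤ f I + f J)
    (hc : ∀ I : Finset (Fin n), ∑ j ∈ I, a j ≤ (f I : ℤ))
    (ht : Tight f a univ) (j : Fin n) :
    Tight f a (Dset f a j) ∧ j ∈ Dset f a j := by
  classical
  have key : ∀ s : Finset (Finset (Fin n)), s.Nonempty →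
      (∀ I ∈ s, Tight f a I ∧ j ∈ I) → Tight f a (s.inf id) ∧ j ∈ s.inf id := by
    intro s hs
    induction hs using Finset.Nonempty.cons_induction with
    | singleton I => intro h; simpa using h I (by simp)
    | cons I s hIs hs ih =>
      intro h
      have hI := h I (by simp)
      have hrest := ih (fun J hJ => h J (by simp [hJ]))
      rw [Finset.inf_cons]
      have := tight_union_inter hsub hc hI.1 hrest.1
      exact ⟨this.2, by simp [Finset.mem_inter]; exact ⟨hI.2, hrest.2⟩⟩
  have hne : ((univ : Finset (Finset (Fin n))).filter (fun I => Tight f a I ∧ j ∈ I)).Nonempty :=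
    ⟨univ, by simp [ht]⟩
  have := key _ hne (fun I hI => (Finset.mem_filter.mp hI).2)
  exact this

lemma Dset_min {a : Fin n → ℤ} {j : Fin n} {I : Finset (Fin n)}
    (hI : Tight f a I) (hj : j ∈ I) : Dset f a j ⊆ I := by
  classical
  have : I ∈ (univ : Finset (Finset (Fin n))).filter (fun I => Tight f a I ∧ j ∈ I) := by
    simp [hI, hj]
  exact (Finset.inf_le (f := id) this : _ ≤ I)

/-- the exchange move -/
lemma sum_move {a : Fin n → ℤ} {j j' : Fin n} (I : Finset (Fin n)) :
    ∑ k ∈ I, (a - Pi.single j 1 + Pi.single j' 1 : Fin n → ℤ) k =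
      ∑ k ∈ I, a k - (if j ∈ I then 1 else 0) + (if j' ∈ I then 1 else 0) := by
  have h1 : ∑ k ∈ I, (Pi.single j (1:ℤ)) k = (if j ∈ I then 1 else 0) := by
    rw [show ∑ k ∈ I, (Pi.single j (1:ℤ)) k = ∑ k ∈ I, if k = j then (1:ℤ) else 0 from
      Finset.sum_congr rfl (fun k _ => by simp [Pi.single_apply])]
    simp [Finset.sum_ite_eq' I j (fun _ => (1:ℤ))]
  have h2 : ∑ k ∈ I, (Pi.single j' (1:ℤ)) k = (if j' ∈ I then 1 else 0) := by
    rw [show ∑ k ∈ I, (Pi.single j' (1:ℤ)) k = ∑ k ∈ I, if k = j' then (1:ℤ) else 0 from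
      Finset.sum_congr rfl (fun k _ => by simp [Pi.single_apply])]
    simp [Finset.sum_ite_eq' I j' (fun _ => (1:ℤ))]
  simp only [Pi.add_apply, Pi.sub_apply, Finset.sum_add_distrib, Finset.sum_sub_distrib, h1, h2]

lemma move_not_mem {a : Fin n → ℤ} {j j' : Fin n} {I : Finset (Fin n)}
    (hI : Tight f a I) (hj' : j' ∈ I) (hj : j ∉ I) :
    a - Pi.single j 1 + Pi.single j' 1 ∉ PB n f := by
  intro hmem
  have hc := (mem_PB_iff.mp hmem).2.1 I
  rw [sum_move] at hc
  simp only [if_pos hj', if_neg hj] at hc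
  unfold Tight at hI
  omega

lemma move_mem {a : Fin n → ℤ} {j j' : Fin n} (ha : a ∈ PB n f)
    (hne : j' ≠ j) (h1 : 1 ≤ a j)
    (hT : ∀ I : Finset (Fin n), Tight f a I → j' ∈ I → j ∈ I) :
    a - Pi.single j 1 + Pi.single j' 1 ∉ PB n f → False := by
  intro hnot
  apply hnot
  obtain ⟨hpos, hc, htot⟩ := mem_PB_iff.mp ha
  rw [mem_PB_iff]
  refine ⟨?_, ?_, ?_⟩
  · intro k
    by_cases hk : k = j
    · subst hk
      simp [Pi.single_apply, hne.symm, Pi.sub_apply, Pi.add_apply]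
      omega
    · have : (0:ℤ) ≤ (Pi.single j' (1:ℤ) : Fin n → ℤ) k := by
        simp [Pi.single_apply]; split <;> norm_num
      simp only [Pi.add_apply, Pi.sub_apply, Pi.single_apply, if_neg hk]
      have := hpos k
      split <;> omega
  · intro I
    rw [sum_move]
    by_cases hjI : j ∈ I
    · have := hc I
      split <;> simp <;> omega
    · by_cases hj'I : j' ∈ I
      · have hnt : ¬ Tight f a I := fun ht => hjI (hT I ht hj'I)
        have hlt : ∑ k ∈ I, a k < (f I : ℤ) := lt_of_le_of_ne (hc I) hnt
        simp only [if_neg hjI, if_pos hj'I]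
        omega
      · simp only [if_neg hjI, if_neg hj'I]
        have := hc I; omega
  · rw [sum_move]
    simp [htot]

/-- submodularity for ℤ-valued set functions -/
def Submod (F : Finset (Fin n) → ℤ) : Prop :=
  ∀ I J : Finset (Fin n), F (I ∪ J) + F (I ∩ J) ≤ F I + F J

def Mono (F : Finset (Fin n) → ℤ) : Prop := ∀ I J : Finset (Fin n), I ⊆ J → F I ≤ F J

/-- greedy vector of a set function along the natural order -/
def vec (F : Finset (Fin n) → ℤ) : Fin n → ℤ :=
  fun j => F (Pre n ((j : ℕ) + 1)) - F (Pre n (j : ℕ))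

lemma vec_sum_le {F : Finset (Fin n) → ℤ} (h0 : F ∅ = 0) (hs : Submod F) :
    ∀ k, k ≤ n → ∀ I ⊆ Pre n k, ∑ j ∈ I, vec F j ≤ F I := by
  intro k
  induction k with
  | zero =>
    intro _ I hI
    have hIe : I = ∅ := Finset.subset_empty.mp (by simpa [Pre_zero] using hI)
    simp [hIe, h0]
  | succ k ih =>
    intro hk I hI
    have hkn : k < n := hk
    set m : Fin n := ⟨k, hkn⟩ with hm
    by_cases hmI : m ∈ I
    · have hI' : I.erase m ⊆ Pre n k := by
        intro x hx
        obtain ⟨hxm, hxI⟩ := Finset.mem_erase.mp hx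
        have h1 := hI hxI
        rw [mem_Pre] at *
        have h2 : (x : ℕ) ≠ k := fun h => hxm (Fin.ext h)
        omega
      have e1 : ∑ j ∈ I.erase m, vec F j + vec F m = ∑ j ∈ I, vec F j :=
        Finset.sum_erase_add I _ hmI
      have hsub1 := hs (Pre n k) I
      have eU : Pre n k ∪ I = Pre n (k + 1) := by
        ext x
        simp only [Finset.mem_union, mem_Pre]
        constructor
        · rintro (h | h)
          · omega
          · exact mem_Pre.mp (hI h)
        · intro h
          by_cases hx : (x : ℕ) < k
          · exact Or.inl hx
          · right
            have : x = m := Fin.ext (by show (x:ℕ) = k; omega)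
            rwa [this]
      have eI : Pre n k ∩ I = I.erase m := by
        ext x
        simp only [Finset.mem_inter, mem_Pre, Finset.mem_erase]
        constructor
        · rintro ⟨h1, h2⟩
          refine ⟨fun h => ?_, h2⟩
          rw [h] at h1
          exact absurd h1 (by simp [hm])
        · rintro ⟨h1, h2⟩
          have h3 := mem_Pre.mp (hI h2)
          have h4 : (x : ℕ) ≠ k := fun h => h1 (Fin.ext h)
          exact ⟨by omega, h2⟩
      rw [eU, eI] at hsub1
      have ih' := ih (by omega) _ hI'
      have : vec F m = F (Pre n (k + 1)) - F (Pre n k) := rfl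
      linarith [e1, hsub1, ih']
    · have hI' : I ⊆ Pre n k := by
        intro x hx
        have := hI hx
        rw [mem_Pre] at *
        have : x ≠ m := fun h => hmI (h ▸ hx)
        have : (x : ℕ) ≠ k := fun h => this (Fin.ext h)
        omega
      exact ih (by omega) _ hI'

lemma vec_sum_pre {F : Finset (Fin n) → ℤ} (h0 : F ∅ = 0) :
    ∀ k, k ≤ n → ∑ j ∈ Pre n k, vec F j = F (Pre n k) := by
  intro k
  induction k with
  | zero => simp [Pre_zero, h0]
  | succ k ih =>
    intro hk
    have hkn : k < n := hk
    rw [Pre_succ hkn, Finset.sum_insert (not_mem_Pre_self hkn), ih (by omega)]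
    have : vec F ⟨k, hkn⟩ = F (Pre n (k + 1)) - F (Pre n k) := rfl
    rw [this, ← Pre_succ hkn]
    ring

lemma vec_mem_PB {F : Finset (Fin n) → ℤ} (h0 : F ∅ = 0) (hm : Mono F) (hs : Submod F)
    (hle : ∀ I : Finset (Fin n), F I ≤ (f I : ℤ)) (htop : F univ = (f univ : ℤ)) :
    vec F ∈ PB n f := by
  rw [mem_PB_iff]
  refine ⟨?_, ?_, ?_⟩
  · intro j
    have := hm (Pre n (j : ℕ)) (Pre n ((j : ℕ) + 1)) (Pre_mono (by omega))
    simp only [vec]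
    omega
  · intro I
    have hIsub : I ⊆ Pre n n := by rw [Pre_top]; exact Finset.subset_univ I
    exact le_trans (vec_sum_le h0 hs n le_rfl I hIsub) (hle I)
  · have : (univ : Finset (Fin n)) = Pre n n := Pre_top.symm
    rw [this, vec_sum_pre h0 n le_rfl, Pre_top, htop]

lemma aux_inactive {a b : Fin n → ℤ}
    (hsub : ∀ I J : Finset (Fin n), f (I ∪ J) + f (I ∩ J) ≤ f I + f J)
    (ha : a ∈ PB n f) (hb : b ∈ PB n f) {j : Fin n} (hj : a j < b j)
    (hmin : ∀ k, a k ≠ b k → j ≤ k) : ∃ k, b k < a k ∧ ¬ IntAct f a k := by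
  obtain ⟨hpos, hc, htot⟩ := mem_PB_iff.mp ha
  have htu : Tight f a univ := htot
  obtain ⟨hDt, hDj⟩ := Dset_spec hsub hc htu j
  set D := Dset f a j with hD
  have hbD : ∑ k ∈ D, b k ≤ (f D : ℤ) := (mem_PB_iff.mp hb).2.1 D
  have hex : ∃ k ∈ D, b k < a k := by
    by_contra hno
    push_neg at hno
    have hlt : ∑ k ∈ D, a k < ∑ k ∈ D, b k :=
      Finset.sum_lt_sum (fun k hk => hno k hk) ⟨j, hDj, hj⟩
    rw [hDt] at hlt
    omega
  obtain ⟨k, hkD, hk⟩ := hex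
  have hne : a k ≠ b k := fun h => by rw [h] at hk; exact lt_irrefl _ hk
  have hjk : j < k := by
    rcases lt_or_eq_of_le (hmin k (fun h => hne h)) with h | h
    · exact h
    · exfalso; rw [← h] at hk; omega
  refine ⟨k, hk, ?_⟩
  intro hact
  have h1k : 1 ≤ a k := by have := (mem_PB_iff.mp hb).1 k; omega
  exact move_mem ha (ne_of_lt hjk) h1k
    (fun I hI hjI => Dset_min hI hjI hkD) (hact j hjk)

lemma eq_of_active_except {a b : Fin n → ℤ}
    (hsub : ∀ I J : Finset (Fin n), f (I ∪ J) + f (I ∩ J) ≤ f I + f J)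
    (ha : a ∈ PB n f) (hb : b ∈ PB n f) (i : Fin n)
    (haA : ∀ k, k ≠ i → IntAct f a k) (hbA : ∀ k, k ≠ i → IntAct f b k)
    (hii : a i = b i) : a = b := by
  by_contra hne
  obtain ⟨k0, hk0⟩ := Function.ne_iff.mp hne
  have hsne : (univ.filter (fun k => a k ≠ b k)).Nonempty := ⟨k0, by simp [hk0]⟩
  set j := (univ.filter (fun k => a k ≠ b k)).min' hsne with hj
  have hjmem : a j ≠ b j := by
    have := Finset.min'_mem _ hsne
    simpa using this
  have hmin : ∀ k, a k ≠ b k → j ≤ k := fun k hk =>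
    Finset.min'_le _ k (by simp [hk])
  rcases lt_or_gt_of_ne hjmem with h | h
  · obtain ⟨k, hk, hkact⟩ := aux_inactive hsub ha hb h hmin
    have hki : k ≠ i := fun e => by rw [e] at hk; omega
    exact hkact (haA k hki)
  · obtain ⟨k, hk, hkact⟩ := aux_inactive hsub hb ha h (fun k hk => hmin k (Ne.symm hk))
    have hki : k ≠ i := fun e => by rw [e] at hk; omega
    exact hkact (hbA k hki)

lemma eq_of_all_active {a b : Fin n → ℤ}
    (hsub : ∀ I J : Finset (Fin n), f (I ∪ J) + f (I ∩ J) ≤ f I + f J)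
    (ha : a ∈ PB n f) (hb : b ∈ PB n f)
    (haA : ∀ k, IntAct f a k) (hbA : ∀ k, IntAct f b k) : a = b := by
  by_contra hne
  obtain ⟨k0, hk0⟩ := Function.ne_iff.mp hne
  have hsne : (univ.filter (fun k => a k ≠ b k)).Nonempty := ⟨k0, by simp [hk0]⟩
  set j := (univ.filter (fun k => a k ≠ b k)).min' hsne with hj
  have hjmem : a j ≠ b j := by
    have := Finset.min'_mem _ hsne
    simpa using this
  have hmin : ∀ k, a k ≠ b k → j ≤ k := fun k hk =>
    Finset.min'_le _ k (by simp [hk])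
  rcases lt_or_gt_of_ne hjmem with h | h
  · obtain ⟨k, _, hkact⟩ := aux_inactive hsub ha hb h hmin
    exact hkact (haA k)
  · obtain ⟨k, _, hkact⟩ := aux_inactive hsub hb ha h (fun k hk => hmin k (Ne.symm hk))
    exact hkact (hbA k)

lemma not_act_elim {a : Fin n → ℤ} (ha : a ∈ PB n f) {m j' : Fin n}
    (hne : j' ≠ m) (h1 : 1 ≤ a m) (hnm : a - Pi.single m 1 + Pi.single j' 1 ∉ PB n f) :
    ∃ I, Tight f a I ∧ j' ∈ I ∧ m ∉ I := by
  by_contra hno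
  push_neg at hno
  exact move_mem ha hne h1 (fun I hI hjI => hno I hI hjI) hnm

lemma prefix_tight {a : Fin n → ℤ}
    (hf0 : f ∅ = 0)
    (hmono : ∀ I J : Finset (Fin n), I ⊆ J → f I ≤ f J)
    (hsub : ∀ I J : Finset (Fin n), f (I ∪ J) + f (I ∩ J) ≤ f I + f J)
    (ha : a ∈ PB n f) (i : Fin n)
    (hact : ∀ j, j ≠ i → IntAct f a j) :
    ∀ k, (i : ℕ) < k → k ≤ n → Tight f a (Pre n k) := by
  obtain ⟨hpos, hc, htot⟩ := mem_PB_iff.mp ha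
  have huniv : Tight f a univ := htot
  have main : ∀ d, (i : ℕ) < n - d → Tight f a (Pre n (n - d)) := by
    intro d
    induction d with
    | zero => intro _; simpa [Pre_top] using huniv
    | succ d ih =>
      intro hid
      have hdn : d < n := by omega
      set k := n - (d + 1) with hk
      have hkn : k < n := by omega
      have hprev : Tight f a (Pre n (k + 1)) := by
        have hsucc : n - d = k + 1 := by omega
        have := ih (by omega)
        rwa [hsucc] at this
      set m : Fin n := ⟨k, hkn⟩ with hm
      have hmk : (m : ℕ) = k := rfl
      have hmi : m ≠ i := by intro e; rw [← e, hmk] at hid; omega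
      by_cases h0 : a m = 0
      · have e1 : ∑ j ∈ Pre n (k + 1), a j = ∑ j ∈ Pre n k, a j + a m := by
          rw [Pre_succ hkn, Finset.sum_insert (not_mem_Pre_self hkn)]; ring
        have hub := hc (Pre n k)
        have hmo : (f (Pre n k) : ℤ) ≤ f (Pre n (k + 1)) := by
          exact_mod_cast hmono _ _ (Pre_mono (by omega))
        unfold Tight at hprev ⊢
        omega
      · have h1 : 1 ≤ a m := by have := hpos m; omega
        have claim : ∀ t, t ≤ k → ∃ U, Tight f a U ∧ Pre n t ⊆ U ∧ m ∉ U := by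
          intro t
          induction t with
          | zero =>
            intro _
            exact ⟨∅, by simp [Tight, hf0], by simp [Pre_zero], by simp⟩
          | succ t iht =>
            intro ht
            obtain ⟨U, hU, hUsub, hUm⟩ := iht (by omega)
            have htn : t < n := by omega
            set j' : Fin n := ⟨t, htn⟩ with hj'
            have hj'k : (j' : ℕ) = t := rfl
            have hj'm : j' ≠ m := by
              intro e
              have : (t : ℕ) = k := by rw [← hj'k, e, hmk]
              omega
            have hj'lt : j' < m := by
              rw [Fin.lt_def, hj'k, hmk]; omega
            have hnm := hact m hmi j' hj'lt
            obtain ⟨I, hIt, hj'I, hmI⟩ := not_act_elim ha hj'm h1 hnm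
            refine ⟨U ∪ I, (tight_union_inter hsub hc hU hIt).1, ?_, by simp [hUm, hmI]⟩
            intro x hx
            rw [mem_Pre] at hx
            rcases Nat.lt_or_ge (x : ℕ) t with h | h
            · exact Finset.mem_union_left _ (hUsub (mem_Pre.mpr h))
            · have hxj : x = j' := Fin.ext (by rw [hj'k]; omega)
              exact Finset.mem_union_right _ (hxj ▸ hj'I)
        obtain ⟨U, hU, hUsub, hUm⟩ := claim k le_rfl
        have hUP := (tight_union_inter hsub hc hU hprev).2
        have heq : U ∩ Pre n (k + 1) = Pre n k := by
          ext x
          simp only [Finset.mem_inter, mem_Pre]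
          constructor
          · rintro ⟨hxU, hxk⟩
            have hxm : x ≠ m := fun e => hUm (e ▸ hxU)
            have : (x : ℕ) ≠ k := fun e => hxm (Fin.ext (by rw [hmk]; omega))
            omega
          · intro hx
            exact ⟨hUsub (mem_Pre.mpr hx), by omega⟩
        rwa [heq] at hUP
  intro k hik hkn
  have hkk : k = n - (n - k) := by omega
  rw [hkk]
  exact main (n - k) (by omega)

lemma greedy_exists
    (hf0 : f ∅ = 0)
    (hmono : ∀ I J : Finset (Fin n), I ⊆ J → f I ≤ f J)
    (hsub : ∀ I J : Finset (Fin n), f (I ∪ J) + f (I ∩ J) ≤ f I + f J) :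
    ∃ gv ∈ PB n f, ∀ j, IntAct f gv j := by
  set F : Finset (Fin n) → ℤ := fun S => (f S : ℤ) with hF
  have h0 : F ∅ = 0 := by simp [hF, hf0]
  have hm : Mono F := fun I J h => by simp only [hF]; exact_mod_cast hmono I J h
  have hs : Submod F := fun I J => by simp only [hF]; exact_mod_cast hsub I J
  refine ⟨vec F, vec_mem_PB h0 hm hs (fun I => le_refl _) rfl, ?_⟩
  intro j j' hj'
  rw [Fin.lt_def] at hj'
  have hkn : (j' : ℕ) + 1 ≤ n := j'.isLt
  have ht : Tight f (vec F) (Pre n ((j' : ℕ) + 1)) := by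
    unfold Tight
    rw [vec_sum_pre h0 _ hkn]
  exact move_not_mem ht (by rw [mem_Pre]; omega) (by rw [mem_Pre]; omega)

lemma range_lower {a : Fin n → ℤ}
    (hf0 : f ∅ = 0)
    (hmono : ∀ I J : Finset (Fin n), I ⊆ J → f I ≤ f J)
    (hsub : ∀ I J : Finset (Fin n), f (I ∪ J) + f (I ∩ J) ≤ f I + f J)
    (ha : a ∈ PB n f) (i : Fin n)
    (hact : ∀ j, j ≠ i → IntAct f a j) :
    (f (Pre n ((i : ℕ) + 1)) : ℤ) - f (Pre n (i : ℕ)) ≤ a i := by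
  have ht := prefix_tight hf0 hmono hsub ha i hact ((i : ℕ) + 1) (by omega) i.isLt
  have hc := (mem_PB_iff.mp ha).2.1 (Pre n (i : ℕ))
  have hPrei : Pre n ((i : ℕ) + 1) = insert i (Pre n (i : ℕ)) := by
    have := Pre_succ (n := n) i.isLt
    simpa using this
  unfold Tight at ht
  rw [hPrei, Finset.sum_insert (by simp)] at ht
  rw [hPrei]
  omega

lemma surj_exists
    (hf0 : f ∅ = 0)
    (hmono : ∀ I J : Finset (Fin n), I ⊆ J → f I ≤ f J)
    (hsub : ∀ I J : Finset (Fin n), f (I ∪ J) + f (I ∩ J) ≤ f I + f J)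
    (i : Fin n) (v : ℤ)
    (hv1 : (f (Pre n ((i : ℕ) + 1)) : ℤ) - f (Pre n (i : ℕ)) ≤ v)
    (hv2 : v ≤ (f {i} : ℤ)) :
    ∃ a ∈ PB n f, a i = v ∧ ∀ j, j ≠ i → IntAct f a j := by
  have zsub : ∀ I J : Finset (Fin n), (f (I ∪ J) : ℤ) + f (I ∩ J) ≤ f I + f J :=
    fun I J => by exact_mod_cast hsub I J
  have zmono : ∀ I J : Finset (Fin n), I ⊆ J → (f I : ℤ) ≤ f J :=
    fun I J h => by exact_mod_cast hmono I J h
  have hv0 : 0 ≤ v := by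
    have := zmono _ _ (Pre_mono (n := n) (k := (i : ℕ)) (l := (i : ℕ) + 1) (by omega))
    omega
  have hPrei : Pre n ((i : ℕ) + 1) = insert i (Pre n (i : ℕ)) := by
    have := Pre_succ (n := n) i.isLt
    simpa using this
  have hiPre : i ∉ Pre n (i : ℕ) := by simp
  have marg : ∀ S : Finset (Fin n), i ∉ S → Pre n (i : ℕ) ⊆ S →
      (f (S ∪ {i}) : ℤ) - f S ≤ (f (Pre n ((i : ℕ) + 1)) : ℤ) - f (Pre n (i : ℕ)) := by
    intro S hiS hPS
    have hU : Pre n ((i : ℕ) + 1) ∪ S = S ∪ {i} := by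
      ext x
      rw [hPrei]
      simp only [Finset.mem_union, Finset.mem_insert, mem_Pre, Finset.mem_singleton]
      constructor
      · rintro ((h | h) | h)
        · exact Or.inr h
        · exact Or.inl (hPS (mem_Pre.mpr h))
        · exact Or.inl h
      · rintro (h | h)
        · exact Or.inr h
        · exact Or.inl (Or.inl h)
    have hI : Pre n ((i : ℕ) + 1) ∩ S = Pre n (i : ℕ) := by
      ext x
      simp only [Finset.mem_inter, mem_Pre]
      constructor
      · rintro ⟨h1, h2⟩
        have hxi : x ≠ i := fun e => hiS (e ▸ h2)
        have : (x : ℕ) ≠ (i : ℕ) := fun e => hxi (Fin.ext e)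
        omega
      · intro h
        exact ⟨by omega, hPS (mem_Pre.mpr h)⟩
    have := zsub (Pre n ((i : ℕ) + 1)) S
    rw [hU, hI] at this
    omega
  set fmin : Finset (Fin n) → ℤ := fun T => min ((f T : ℤ)) ((f (T ∪ {i}) : ℤ) - v) with hfmin
  have fmin_le_left : ∀ T : Finset (Fin n), fmin T ≤ (f T : ℤ) := fun T => min_le_left _ _
  have fmin_le_right : ∀ T : Finset (Fin n), fmin T ≤ (f (T ∪ {i}) : ℤ) - v :=
    fun T => min_le_right _ _
  have fmin_eq_right : ∀ T : Finset (Fin n), (f (T ∪ {i}) : ℤ) - v ≤ (f T : ℤ) →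
      fmin T = (f (T ∪ {i}) : ℤ) - v := fun T h => min_eq_right h
  have fminmono : ∀ A B : Finset (Fin n), A ⊆ B → fmin A ≤ fmin B := by
    intro A B h
    exact min_le_min (zmono _ _ h) (by
      have := zmono (A ∪ {i}) (B ∪ {i}) (Finset.union_subset_union_left h)
      omega)
  have fminsub : ∀ A B : Finset (Fin n), i ∉ A → i ∉ B →
      fmin (A ∪ B) + fmin (A ∩ B) ≤ fmin A + fmin B := by
    intro A B hiA hiB
    have id1 : A ∪ (B ∪ {i}) = (A ∪ B) ∪ {i} := by ext x; simp only [Finset.mem_union, Finset.mem_inter, Finset.mem_singleton, Finset.mem_insert, Finset.mem_sdiff]; tauto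
    have id2 : A ∩ (B ∪ {i}) = A ∩ B := by
      ext x
      simp only [Finset.mem_inter, Finset.mem_union, Finset.mem_singleton]
      constructor
      · rintro ⟨h1, h2 | h2⟩
        · exact ⟨h1, h2⟩
        · exact absurd (h2 ▸ h1) hiA
      · rintro ⟨h1, h2⟩
        exact ⟨h1, Or.inl h2⟩
    have id3 : B ∪ (A ∪ {i}) = (A ∪ B) ∪ {i} := by ext x; simp only [Finset.mem_union, Finset.mem_inter, Finset.mem_singleton, Finset.mem_insert, Finset.mem_sdiff]; tauto
    have id4 : B ∩ (A ∪ {i}) = A ∩ B := by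
      ext x
      simp only [Finset.mem_inter, Finset.mem_union, Finset.mem_singleton]
      constructor
      · rintro ⟨h1, h2 | h2⟩
        · exact ⟨h2, h1⟩
        · exact absurd (h2 ▸ h1) hiB
      · rintro ⟨h1, h2⟩
        exact ⟨h2, Or.inl h1⟩
    have id5 : (A ∪ {i}) ∪ (B ∪ {i}) = (A ∪ B) ∪ {i} := by ext x; simp only [Finset.mem_union, Finset.mem_inter, Finset.mem_singleton, Finset.mem_insert, Finset.mem_sdiff]; tauto
    have id6 : (A ∪ {i}) ∩ (B ∪ {i}) = (A ∩ B) ∪ {i} := by ext x; simp only [Finset.mem_union, Finset.mem_inter, Finset.mem_singleton, Finset.mem_insert, Finset.mem_sdiff]; tauto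
    have b1 := fmin_le_left (A ∪ B)
    have b2 := fmin_le_right (A ∪ B)
    have b3 := fmin_le_left (A ∩ B)
    have b4 := fmin_le_right (A ∩ B)
    rcases min_cases ((f A : ℤ)) ((f (A ∪ {i}) : ℤ) - v) with ⟨e1, _⟩ | ⟨e1, _⟩ <;>
      rcases min_cases ((f B : ℤ)) ((f (B ∪ {i}) : ℤ) - v) with ⟨e2, _⟩ | ⟨e2, _⟩ <;>
      simp only [hfmin] at e1 e2 ⊢ <;> rw [e1, e2] <;> simp only [hfmin] at b1 b2 b3 b4
    · have := zsub A B
      linarith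
    · have := zsub A (B ∪ {i})
      rw [id1, id2] at this
      linarith
    · have := zsub B (A ∪ {i})
      rw [id3, id4] at this
      linarith
    · have := zsub (A ∪ {i}) (B ∪ {i})
      rw [id5, id6] at this
      linarith
  set Fv : Finset (Fin n) → ℤ := fun S => (if i ∈ S then v else 0) + fmin (S \ {i}) with hFv
  have sdiff_no : ∀ S : Finset (Fin n), i ∉ S → S \ {i} = S := by
    intro S hiS
    ext x
    simp only [Finset.mem_sdiff, Finset.mem_singleton]
    exact ⟨fun h => h.1, fun h => ⟨h, fun e => hiS (e ▸ h)⟩⟩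
  have sdiff_yes : ∀ S : Finset (Fin n), i ∈ S → (S \ {i}) ∪ {i} = S := by
    intro S hiS
    ext x
    simp only [Finset.mem_union, Finset.mem_sdiff, Finset.mem_singleton]
    constructor
    · rintro (⟨h1, _⟩ | h1)
      · exact h1
      · exact h1 ▸ hiS
    · intro h
      by_cases hx : x = i
      · exact Or.inr hx
      · exact Or.inl ⟨h, hx⟩
  have h0 : Fv ∅ = 0 := by
    simp only [hFv]
    rw [if_neg (Finset.notMem_empty i), Finset.empty_sdiff]
    simp only [hfmin]
    rw [Finset.empty_union, hf0]
    rw [Nat.cast_zero, min_eq_left (by omega)]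
    ring
  have hmFv : Mono Fv := by
    intro I J h
    simp only [hFv]
    have h1 : (if i ∈ I then v else 0) ≤ (if i ∈ J then v else 0) := by
      by_cases hI : i ∈ I
      · rw [if_pos hI, if_pos (h hI)]
      · rw [if_neg hI]; split <;> omega
    have h2 := fminmono (I \ {i}) (J \ {i}) (Finset.sdiff_subset_sdiff h (Finset.Subset.refl {i}))
    omega
  have hsFv : Submod Fv := by
    intro I J
    simp only [hFv]
    have idU : (I ∪ J) \ {i} = (I \ {i}) ∪ (J \ {i}) := by ext x; simp only [Finset.mem_union, Finset.mem_inter, Finset.mem_singleton, Finset.mem_insert, Finset.mem_sdiff]; tauto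
    have idI : (I ∩ J) \ {i} = (I \ {i}) ∩ (J \ {i}) := by ext x; simp only [Finset.mem_union, Finset.mem_inter, Finset.mem_singleton, Finset.mem_insert, Finset.mem_sdiff]; tauto
    rw [idU, idI]
    have hf := fminsub (I \ {i}) (J \ {i}) (by simp) (by simp)
    have hind : (if i ∈ I ∪ J then v else 0) + (if i ∈ I ∩ J then v else 0) =
        (if i ∈ I then v else 0) + (if i ∈ J then v else 0) := by
      by_cases hI : i ∈ I <;> by_cases hJ : i ∈ J <;>
        simp [hI, hJ, Finset.mem_union, Finset.mem_inter]
    omega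
  have hleFv : ∀ I : Finset (Fin n), Fv I ≤ (f I : ℤ) := by
    intro I
    simp only [hFv]
    by_cases hI : i ∈ I
    · rw [if_pos hI]
      have h5 := fmin_le_right (I \ {i})
      rw [sdiff_yes I hI] at h5
      omega
    · rw [if_neg hI, sdiff_no I hI]
      have := fmin_le_left I
      omega
  have htopFv : Fv univ = (f univ : ℤ) := by
    simp only [hFv]
    rw [if_pos (Finset.mem_univ i)]
    have hm := marg (univ \ {i}) (by simp) (by
      intro x hx
      rw [mem_Pre] at hx
      simp only [Finset.mem_sdiff, Finset.mem_univ, true_and, Finset.mem_singleton]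
      intro e
      rw [e] at hx
      omega)
    rw [sdiff_yes univ (Finset.mem_univ i)] at hm
    have hfm := fmin_eq_right (univ \ {i}) (by
      rw [sdiff_yes univ (Finset.mem_univ i)]
      omega)
    rw [hfm, sdiff_yes univ (Finset.mem_univ i)]
    ring
  have hai : vec Fv i = v := by
    show Fv (Pre n ((i : ℕ) + 1)) - Fv (Pre n (i : ℕ)) = v
    have e1 : Pre n ((i : ℕ) + 1) \ {i} = Pre n (i : ℕ) := by
      rw [hPrei]
      ext x
      simp only [Finset.mem_sdiff, Finset.mem_insert, Finset.mem_singleton]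
      constructor
      · rintro ⟨h1 | h1, h2⟩
        · exact absurd h1 h2
        · exact h1
      · intro h
        exact ⟨Or.inr h, fun e => hiPre (e ▸ h)⟩
    simp only [hFv]
    rw [if_pos (by rw [hPrei]; exact Finset.mem_insert_self i _), if_neg hiPre, e1,
      sdiff_no _ hiPre]
    ring
  refine ⟨vec Fv, vec_mem_PB h0 hmFv hsFv hleFv htopFv, hai, ?_⟩
  intro j hji j' hj'
  have hj'j : (j' : ℕ) < (j : ℕ) := hj'
  have hjine : (j : ℕ) ≠ (i : ℕ) := fun e => hji (Fin.ext e)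
  rcases Nat.lt_or_ge (i : ℕ) (j : ℕ) with hij | hij
  · -- i before j : the prefix (Pre n j) is tight
    have hiT : i ∈ Pre n (j : ℕ) := mem_Pre.mpr hij
    have hm := marg (Pre n (j : ℕ) \ {i}) (by simp) (by
      intro x hx
      rw [mem_Pre] at hx
      simp only [Finset.mem_sdiff, Finset.mem_singleton, mem_Pre]
      exact ⟨by omega, fun e => by rw [e] at hx; omega⟩)
    rw [sdiff_yes _ hiT] at hm
    have hfm := fmin_eq_right (Pre n (j : ℕ) \ {i}) (by rw [sdiff_yes _ hiT]; omega)
    rw [sdiff_yes _ hiT] at hfm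
    have htight : Tight f (vec Fv) (Pre n (j : ℕ)) := by
      unfold Tight
      rw [vec_sum_pre h0 _ (le_of_lt j.isLt)]
      simp only [hFv]
      rw [if_pos hiT, hfm]
      ring
    exact move_not_mem htight (mem_Pre.mpr (by omega)) (by rw [mem_Pre]; omega)
  · -- j before i
    have hjlti : (j : ℕ) < (i : ℕ) := by omega
    have hiT0 : i ∉ Pre n ((j' : ℕ) + 1) := by rw [mem_Pre]; omega
    have hsum0 : ∑ k ∈ Pre n ((j' : ℕ) + 1), vec Fv k = fmin (Pre n ((j' : ℕ) + 1)) := by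
      rw [vec_sum_pre h0 _ j'.isLt]
      simp only [hFv]
      rw [if_neg hiT0, sdiff_no _ hiT0]
      ring
    rcases min_cases ((f (Pre n ((j' : ℕ) + 1)) : ℤ))
        ((f (Pre n ((j' : ℕ) + 1) ∪ {i}) : ℤ) - v) with ⟨e, _⟩ | ⟨e, _⟩
    · have htight : Tight f (vec Fv) (Pre n ((j' : ℕ) + 1)) := by
        unfold Tight
        rw [hsum0]
        simp only [hfmin]
        exact e
      exact move_not_mem htight (by rw [mem_Pre]; omega) (by rw [mem_Pre]; omega)
    · have hT1i : Pre n ((j' : ℕ) + 1) ∪ {i} = insert i (Pre n ((j' : ℕ) + 1)) := by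
        ext x; simp only [Finset.mem_union, Finset.mem_inter, Finset.mem_singleton, Finset.mem_insert, Finset.mem_sdiff]; tauto
      have htight : Tight f (vec Fv) (Pre n ((j' : ℕ) + 1) ∪ {i}) := by
        unfold Tight
        rw [hT1i, Finset.sum_insert hiT0, hai, hsum0]
        have : fmin (Pre n ((j' : ℕ) + 1)) = (f (Pre n ((j' : ℕ) + 1) ∪ {i}) : ℤ) - v := by
          simp only [hfmin]
          exact e
        rw [this, ← hT1i]
        ring
      refine move_not_mem htight ?_ ?_
      · exact Finset.mem_union_left _ (mem_Pre.mpr (by omega))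
      · simp only [Finset.mem_union, Finset.mem_singleton, mem_Pre]
        push_neg
        exact ⟨by omega, fun e2 => hjine (e2 ▸ rfl)⟩

end withf

end Dev

open scoped Classical in
/-- The coefficient of `x^(n-1)` in `J_P(x,1)`, i.e. the number of bases with
`ι(a) = n - 1`, equals `Σ_i f({i}) - f([n])`. -/
theorem coeff_subtop_int
    (n : ℕ) (hn : 0 < n) (f : Finset (Fin n) → ℕ)
    (hf0 : f ∅ = 0)
    (hmono : ∀ I J : Finset (Fin n), I ⊆ J → f I ≤ f J)
    (hsub : ∀ I J : Finset (Fin n), f (I ∪ J) + f (I ∩ J) ≤ f I + f J) :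
    (((PB n f).filter fun a => iota f a = n - 1).card : ℤ) =
      (∑ i : Fin n, (f {i} : ℤ)) - (f Finset.univ : ℤ) := by
  classical
  set G : Finset (Fin n → ℤ) := (PB n f).filter (fun a => ∀ j, IntAct f a j) with hGdef
  set N : Fin n → Finset (Fin n → ℤ) :=
    fun i => (PB n f).filter (fun a => ∀ j, j ≠ i → IntAct f a j) with hNdef
  have hGN : ∀ i, G ⊆ N i := by
    intro i a ha
    obtain ⟨h1, h2⟩ := Finset.mem_filter.mp ha
    exact Finset.mem_filter.mpr ⟨h1, fun j _ => h2 j⟩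
  have hG1 : G.card = 1 := by
    obtain ⟨gv, hgv, hgact⟩ := Dev.greedy_exists hf0 hmono hsub
    rw [Finset.card_eq_one]
    refine ⟨gv, ?_⟩
    ext a
    rw [Finset.mem_singleton]
    constructor
    · intro ha
      obtain ⟨h1, h2⟩ := Finset.mem_filter.mp ha
      exact Dev.eq_of_all_active hsub h1 hgv h2 hgact
    · intro h
      rw [h]
      exact Finset.mem_filter.mpr ⟨hgv, hgact⟩
  have hgle : ∀ i : Fin n,
      (f (Dev.Pre n ((i : ℕ) + 1)) : ℤ) - f (Dev.Pre n (i : ℕ)) ≤ (f {i} : ℤ) := by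
    intro i
    have hPrei : Dev.Pre n ((i : ℕ) + 1) = insert i (Dev.Pre n (i : ℕ)) := by
      have := Dev.Pre_succ (n := n) i.isLt
      simpa using this
    have hU : Dev.Pre n (i : ℕ) ∪ {i} = Dev.Pre n ((i : ℕ) + 1) := by
      rw [hPrei]
      ext x
      simp only [Finset.mem_union, Finset.mem_insert, Finset.mem_singleton]
      tauto
    have hI : Dev.Pre n (i : ℕ) ∩ {i} = ∅ := by
      ext x
      simp only [Finset.mem_inter, Finset.mem_singleton, Finset.notMem_empty, iff_false,
        not_and, Dev.mem_Pre]
      intro hx e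
      rw [e] at hx
      omega
    have := hsub (Dev.Pre n (i : ℕ)) {i}
    rw [hU, hI, hf0] at this
    omega
  have hNcard : ∀ i : Fin n, ((N i).card : ℤ) =
      (f {i} : ℤ) + 1 - ((f (Dev.Pre n ((i : ℕ) + 1)) : ℤ) - f (Dev.Pre n (i : ℕ))) := by
    intro i
    have hbij : (N i).card =
        (Finset.Icc ((f (Dev.Pre n ((i : ℕ) + 1)) : ℤ) - f (Dev.Pre n (i : ℕ)))
          ((f {i} : ℤ))).card := by
      apply Finset.card_bij (fun a _ => a i)
      · intro a ha
        rw [Finset.mem_Icc]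
        obtain ⟨haPB, hact⟩ := Finset.mem_filter.mp ha
        refine ⟨Dev.range_lower hf0 hmono hsub haPB i hact, ?_⟩
        have := (Dev.mem_PB_iff.mp haPB).2.1 {i}
        simpa using this
      · intro a ha b hb hab
        obtain ⟨haPB, hacta⟩ := Finset.mem_filter.mp ha
        obtain ⟨hbPB, hactb⟩ := Finset.mem_filter.mp hb
        exact Dev.eq_of_active_except hsub haPB hbPB i hacta hactb hab
      · intro v hv
        rw [Finset.mem_Icc] at hv
        obtain ⟨a, haPB, hai, hact⟩ := Dev.surj_exists hf0 hmono hsub i v hv.1 hv.2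
        exact ⟨a, Finset.mem_filter.mpr ⟨haPB, hact⟩, hai⟩
    rw [hbij, Int.card_Icc]
    rw [Int.toNat_of_nonneg (by have := hgle i; omega)]
  have hcomp : ∀ a, iota f a + (univ.filter (fun i => ¬ IntAct f a i)).card = n := by
    intro a
    unfold iota IntSet
    rw [Finset.card_filter_add_card_filter_not]
    simp
  have hpart : (PB n f).filter (fun a => iota f a = n - 1) =
      Finset.univ.biUnion (fun i => N i \ G) := by
    ext a
    simp only [Finset.mem_biUnion, Finset.mem_filter, Finset.mem_sdiff, Finset.mem_univ,
      true_and]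
    constructor
    · rintro ⟨haPB, hiota⟩
      have hX : (univ.filter (fun i => ¬ IntAct f a i)).card = 1 := by
        have h1 := hcomp a
        have h2 : iota f a ≤ n := by omega
        omega
      obtain ⟨i, hi⟩ := Finset.card_eq_one.mp hX
      refine ⟨i, Finset.mem_filter.mpr ⟨haPB, ?_⟩, ?_⟩
      · intro j hj
        by_contra hna
        have : j ∈ univ.filter (fun i => ¬ IntAct f a i) := by simp [hna]
        rw [hi, Finset.mem_singleton] at this
        exact hj this
      · intro hG'
        obtain ⟨_, hall⟩ := Finset.mem_filter.mp hG'
        have : i ∈ univ.filter (fun i => ¬ IntAct f a i) := by rw [hi]; simp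
        simp only [Finset.mem_filter] at this
        exact this.2 (hall i)
    · rintro ⟨i, hNi, hnG⟩
      obtain ⟨haPB, hact⟩ := Finset.mem_filter.mp hNi
      have hnai : ¬ IntAct f a i := by
        intro hai
        exact hnG (Finset.mem_filter.mpr ⟨haPB, fun j => by
          by_cases hj : j = i
          · exact hj ▸ hai
          · exact hact j hj⟩)
      have hX : univ.filter (fun i => ¬ IntAct f a i) = {i} := by
        ext j
        simp only [Finset.mem_filter, Finset.mem_univ, true_and, Finset.mem_singleton]
        constructor
        · intro hj
          by_contra hji
          exact hj (hact j hji)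
        · intro hj
          exact hj ▸ hnai
      have := hcomp a
      rw [hX, Finset.card_singleton] at this
      exact ⟨haPB, by omega⟩
  have hdisj : ∀ i ∈ (univ : Finset (Fin n)), ∀ j ∈ (univ : Finset (Fin n)), i ≠ j →
      Disjoint (N i \ G) (N j \ G) := by
    intro i _ j _ hij
    rw [Finset.disjoint_left]
    intro a hai haj
    obtain ⟨hNi, hGi⟩ := Finset.mem_sdiff.mp hai
    obtain ⟨hNj, _⟩ := Finset.mem_sdiff.mp haj
    obtain ⟨haPB, hacti⟩ := Finset.mem_filter.mp hNi
    obtain ⟨_, hactj⟩ := Finset.mem_filter.mp hNj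
    apply hGi
    refine Finset.mem_filter.mpr ⟨haPB, fun k => ?_⟩
    by_cases hk : k = i
    · exact hactj k (hk ▸ hij)
    · exact hacti k hk
  have htel : ∑ i : Fin n, ((f (Dev.Pre n ((i : ℕ) + 1)) : ℤ) - f (Dev.Pre n (i : ℕ))) =
      (f univ : ℤ) := by
    rw [Fin.sum_univ_eq_sum_range (fun m => (f (Dev.Pre n (m + 1)) : ℤ) - f (Dev.Pre n m)) n]
    rw [Finset.sum_range_sub (fun m => (f (Dev.Pre n m) : ℤ)) n]
    rw [Dev.Pre_top, Dev.Pre_zero, hf0]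
    simp
  have hsdcard : ∀ i : Fin n, ((N i \ G).card : ℤ) =
      (f {i} : ℤ) - ((f (Dev.Pre n ((i : ℕ) + 1)) : ℤ) - f (Dev.Pre n (i : ℕ))) := by
    intro i
    have h1 : G.card ≤ (N i).card := Finset.card_le_card (hGN i)
    rw [Finset.card_sdiff_of_subset (hGN i), Nat.cast_sub h1, hG1, hNcard i]
    push_cast
    ring
  rw [hpart, Finset.card_biUnion hdisj]
  push_cast
  rw [Finset.sum_congr rfl (fun i _ => hsdcard i)]
  rw [Finset.sum_sub_distrib, htel]
end

section
/- The coefficient of y^{n−1} in J_P(1, y) = Σ_{a ∈ PB} y^{ε(a)} equals Σ_{i ∈ [n]} f([n] ∖ {i}) − (n − 1)·f([n]); equivalently, the number of bases a ∈ PB with ε(a) = n − 1 is Σ_{i ∈ [n]} f([n] ∖ {i}) − (n − 1)·f([n]). -/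
open Finset

variable {n : ℕ}

/-! ### Auxiliary development -/

open scoped Classical

namespace PolyAux

variable {n : ℕ}

lemma sum_single (I : Finset (Fin n)) (i : Fin n) :
    ∑ j ∈ I, (Pi.single i (1:ℤ)) j = if i ∈ I then 1 else 0 := by
  rw [← Finset.sum_ite_eq' I i (fun _ => (1:ℤ))]
  refine Finset.sum_congr rfl fun j _ => ?_
  rw [Pi.single_apply]

lemma mem_PB_iff (f : Finset (Fin n) → ℕ) (a : Fin n → ℤ) :
    a ∈ PB n f ↔ (∀ i, 0 ≤ a i) ∧ (∀ I : Finset (Fin n), ∑ j ∈ I, a j ≤ (f I : ℤ)) ∧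
      ∑ j, a j = (f Finset.univ : ℤ) := by
  unfold PB
  rw [Finset.mem_filter, Fintype.mem_piFinset]
  constructor
  · rintro ⟨h1, h2, h3⟩
    exact ⟨fun i => (Finset.mem_Icc.mp (h1 i)).1, h2, h3⟩
  · rintro ⟨h1, h2, h3⟩
    refine ⟨fun i => Finset.mem_Icc.mpr ⟨h1 i, ?_⟩, h2, h3⟩
    have := h2 {i}
    simpa using this

variable {f : Finset (Fin n) → ℕ} {a : Fin n → ℤ}

lemma PB_nonneg (ha : a ∈ PB n f) (i : Fin n) : 0 ≤ a i :=
  ((mem_PB_iff f a).mp ha).1 i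

lemma PB_le (ha : a ∈ PB n f) (I : Finset (Fin n)) : ∑ j ∈ I, a j ≤ (f I : ℤ) :=
  ((mem_PB_iff f a).mp ha).2.1 I

lemma PB_sum (ha : a ∈ PB n f) : ∑ j, a j = (f Finset.univ : ℤ) :=
  ((mem_PB_iff f a).mp ha).2.2

lemma tight_univ (ha : a ∈ PB n f) : Tight f a Finset.univ := PB_sum ha

lemma tight_empty (hf0 : f ∅ = 0) : Tight f a (∅ : Finset (Fin n)) := by
  simp [Tight, hf0]

lemma tight_union_inter
    (hsub : ∀ I J : Finset (Fin n), f (I ∪ J) + f (I ∩ J) ≤ f I + f J)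
    (ha : a ∈ PB n f) {I J : Finset (Fin n)} (hI : Tight f a I) (hJ : Tight f a J) :
    Tight f a (I ∪ J) ∧ Tight f a (I ∩ J) := by
  have hsum : ∑ j ∈ I ∪ J, a j + ∑ j ∈ I ∩ J, a j = ∑ j ∈ I, a j + ∑ j ∈ J, a j :=
    Finset.sum_union_inter
  have h1 := PB_le ha (I ∪ J)
  have h2 := PB_le ha (I ∩ J)
  have h3 : (f (I ∪ J) : ℤ) + f (I ∩ J) ≤ (f I : ℤ) + f J := by
    exact_mod_cast hsub I J
  unfold Tight at hI hJ ⊢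
  omega

lemma tight_union (hsub : ∀ I J : Finset (Fin n), f (I ∪ J) + f (I ∩ J) ≤ f I + f J)
    (ha : a ∈ PB n f) {I J : Finset (Fin n)} (hI : Tight f a I) (hJ : Tight f a J) :
    Tight f a (I ∪ J) := (tight_union_inter hsub ha hI hJ).1

lemma tight_inter (hsub : ∀ I J : Finset (Fin n), f (I ∪ J) + f (I ∩ J) ≤ f I + f J)
    (ha : a ∈ PB n f) {I J : Finset (Fin n)} (hI : Tight f a I) (hJ : Tight f a J) :
    Tight f a (I ∩ J) := (tight_union_inter hsub ha hI hJ).2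

lemma tight_inf (hsub : ∀ I J : Finset (Fin n), f (I ∪ J) + f (I ∩ J) ≤ f I + f J)
    (ha : a ∈ PB n f) (s : Finset (Finset (Fin n))) (hne : s.Nonempty)
    (hall : ∀ A ∈ s, Tight f a A) : Tight f a (s.inf id) := by
  induction s using Finset.induction_on with
  | empty => exact absurd hne (by simp)
  | @insert A s hA ih =>
    rw [Finset.inf_insert]
    rcases s.eq_empty_or_nonempty with rfl | hs
    · simpa using hall A (Finset.mem_insert_self A _)
    · have h1 : Tight f a (s.inf id) :=
        ih hs fun B hB => hall B (Finset.mem_insert_of_mem hB)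
      have h2 : Tight f a A := hall A (Finset.mem_insert_self A _)
      exact tight_inter hsub ha h2 h1

/-- The family of tight sets containing `i`. -/
noncomputable def TF (f : Finset (Fin n) → ℕ) (a : Fin n → ℤ) (i : Fin n) :
    Finset (Finset (Fin n)) :=
  Finset.univ.powerset.filter fun I => Tight f a I ∧ i ∈ I

lemma mem_TF {i : Fin n} {I : Finset (Fin n)} :
    I ∈ TF f a i ↔ Tight f a I ∧ i ∈ I := by
  simp [TF]

lemma TF_nonempty (ha : a ∈ PB n f) (i : Fin n) : (TF f a i).Nonempty :=
  ⟨Finset.univ, mem_TF.mpr ⟨tight_univ ha, Finset.mem_univ i⟩⟩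

/-- The minimal tight set containing `i`. -/
noncomputable def Tmin (f : Finset (Fin n) → ℕ) (a : Fin n → ℤ) (i : Fin n) :
    Finset (Fin n) := (TF f a i).inf id

lemma tight_Tmin (hsub : ∀ I J : Finset (Fin n), f (I ∪ J) + f (I ∩ J) ≤ f I + f J)
    (ha : a ∈ PB n f) (i : Fin n) : Tight f a (Tmin f a i) :=
  tight_inf hsub ha _ (TF_nonempty ha i) (fun A hA => (mem_TF.mp hA).1)

lemma mem_Tmin_self (ha : a ∈ PB n f) (i : Fin n) : i ∈ Tmin f a i := by
  have : ({i} : Finset (Fin n)) ≤ Tmin f a i := by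
    refine Finset.le_inf fun A hA => ?_
    simpa using (mem_TF.mp hA).2
  simpa using this (Finset.mem_singleton_self i)

lemma Tmin_subset {i : Fin n} {I : Finset (Fin n)} (hI : Tight f a I) (hiI : i ∈ I) :
    Tmin f a i ⊆ I := by
  have h : (TF f a i).inf id ≤ id I := Finset.inf_le (mem_TF.mpr ⟨hI, hiI⟩)
  exact h

lemma mem_Tmin_iff (hsub : ∀ I J : Finset (Fin n), f (I ∪ J) + f (I ∩ J) ≤ f I + f J)
    (ha : a ∈ PB n f) {i j : Fin n} :
    j ∈ Tmin f a i ↔ ∀ I, Tight f a I → i ∈ I → j ∈ I := by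
  constructor
  · intro hj I hI hiI
    exact Tmin_subset hI hiI hj
  · intro h
    exact h _ (tight_Tmin hsub ha i) (mem_Tmin_self ha i)

lemma sum_move (a : Fin n → ℤ) (i j : Fin n) (I : Finset (Fin n)) :
    ∑ x ∈ I, (a + Pi.single i 1 - Pi.single j 1 : Fin n → ℤ) x =
      ∑ x ∈ I, a x + (if i ∈ I then 1 else 0) - (if j ∈ I then 1 else 0) := by
  simp only [Pi.add_apply, Pi.sub_apply]
  rw [Finset.sum_sub_distrib, Finset.sum_add_distrib, sum_single, sum_single]

lemma move_mem_iff (ha : a ∈ PB n f) {i j : Fin n} (hij : i ≠ j) :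
    a + Pi.single i 1 - Pi.single j 1 ∈ PB n f ↔
      1 ≤ a j ∧ ∀ I, Tight f a I → i ∈ I → j ∈ I := by
  have hbj : (a + Pi.single i 1 - Pi.single j 1 : Fin n → ℤ) j = a j - 1 := by
    simp [Pi.single_eq_of_ne (Ne.symm hij)]
  constructor
  · intro hb
    refine ⟨?_, ?_⟩
    · have := PB_nonneg hb j
      rw [hbj] at this; omega
    · intro I hI hiI
      by_contra hjI
      have h1 := PB_le hb I
      rw [sum_move, if_pos hiI, if_neg hjI] at h1
      rw [Tight] at hI
      omega
  · rintro ⟨h1, h2⟩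
    rw [mem_PB_iff]
    refine ⟨?_, ?_, ?_⟩
    · intro l
      rcases eq_or_ne l j with rfl | hlj
      · rw [hbj]; omega
      · have hl := PB_nonneg ha l
        rcases eq_or_ne l i with rfl | hli
        · simp [Pi.single_eq_of_ne hlj]; omega
        · simp [Pi.single_eq_of_ne hli, Pi.single_eq_of_ne hlj]; omega
    · intro I
      rw [sum_move]
      have hle := PB_le ha I
      by_cases hiI : i ∈ I
      · by_cases hjI : j ∈ I
        · simp only [if_pos hiI, if_pos hjI]; omega
        · have : ¬ Tight f a I := fun ht => hjI (h2 I ht hiI)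
          rw [Tight] at this
          simp only [if_pos hiI, if_neg hjI]; omega
      · split_ifs <;> omega
    · rw [sum_move, if_pos (Finset.mem_univ i), if_pos (Finset.mem_univ j), PB_sum ha]
      ring

/-- `k` is inactive: some exchange into `k` from a smaller index stays in `PB`. -/
def Inact (f : Finset (Fin n) → ℕ) (a : Fin n → ℤ) (k : Fin n) : Prop :=
  ∃ j, j < k ∧ a + Pi.single k 1 - Pi.single j 1 ∈ PB n f

lemma extAct_iff_not_inact {k : Fin n} : ExtAct f a k ↔ ¬ Inact f a k := by
  unfold ExtAct Inact
  push_neg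
  rfl

lemma inact_iff (ha : a ∈ PB n f) {k : Fin n} :
    Inact f a k ↔ ∃ j, j < k ∧ 1 ≤ a j ∧ ∀ I, Tight f a I → k ∈ I → j ∈ I := by
  unfold Inact
  refine exists_congr fun j => and_congr_right fun hj => ?_
  exact move_mem_iff ha (ne_of_gt hj)

lemma exchange (hsub : ∀ I J : Finset (Fin n), f (I ∪ J) + f (I ∩ J) ≤ f I + f J)
    {b : Fin n → ℤ} (ha : a ∈ PB n f) (hb : b ∈ PB n f) {j : Fin n} (hj : a j < b j) :
    ∃ l, b l < a l ∧ a + Pi.single j 1 - Pi.single l 1 ∈ PB n f := by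
  have hT : Tight f a (Tmin f a j) := tight_Tmin hsub ha j
  have hjT : j ∈ Tmin f a j := mem_Tmin_self ha j
  have hex : ∃ l ∈ Tmin f a j, b l < a l := by
    by_contra h
    push_neg at h
    have h1 : ∑ l ∈ Tmin f a j, a l < ∑ l ∈ Tmin f a j, b l :=
      Finset.sum_lt_sum h ⟨j, hjT, hj⟩
    have h2 := PB_le hb (Tmin f a j)
    rw [Tight] at hT
    omega
  obtain ⟨l, hlT, hl⟩ := hex
  have hjl : j ≠ l := by
    rintro rfl; omega
  refine ⟨l, hl, (move_mem_iff ha hjl).mpr ⟨?_, ?_⟩⟩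
  · have := PB_nonneg hb l
    omega
  · intro I hI hjI
    exact Tmin_subset hI hjI hlT

lemma eq_of_almost_active (hsub : ∀ I J : Finset (Fin n), f (I ∪ J) + f (I ∩ J) ≤ f I + f J)
    {b : Fin n → ℤ} (ha : a ∈ PB n f) (hb : b ∈ PB n f) (i : Fin n)
    (hA : ∀ k, k ≠ i → ¬ Inact f a k) (hB : ∀ k, k ≠ i → ¬ Inact f b k)
    (hi : a i = b i) : a = b := by
  by_contra hne
  have hDne : (Finset.univ.filter fun k => a k ≠ b k).Nonempty := by
    rcases Function.ne_iff.mp hne with ⟨k, hk⟩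
    exact ⟨k, by simp [hk]⟩
  set j := (Finset.univ.filter fun k => a k ≠ b k).max' hDne with hjdef
  have hjmem : a j ≠ b j := by
    have := Finset.max'_mem _ hDne
    rw [← hjdef] at this
    simpa using this
  have hji : j ≠ i := fun h => hjmem (by rw [h, hi])
  have hmax : ∀ l, a l ≠ b l → l ≤ j := fun l hl => Finset.le_max' _ l (by simp [hl])
  rcases lt_or_gt_of_ne hjmem with h | h
  · obtain ⟨l, hbl, hmove⟩ := exchange hsub ha hb h
    have hlj : l < j := by
      have h1 : l ≤ j := hmax l (by omega)
      have h2 : l ≠ j := by rintro rfl; omega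
      exact lt_of_le_of_ne h1 h2
    exact hA j hji ⟨l, hlj, hmove⟩
  · obtain ⟨l, hbl, hmove⟩ := exchange hsub hb ha h
    have hlj : l < j := by
      have h1 : l ≤ j := hmax l (by omega)
      have h2 : l ≠ j := by rintro rfl; omega
      exact lt_of_le_of_ne h1 h2
    exact hB j hji ⟨l, hlj, hmove⟩

/-! ### Suffixes and the greedy basis -/

/-- The suffix `{j : m ≤ j}`. -/
def Suf (n m : ℕ) : Finset (Fin n) := Finset.univ.filter fun j => m ≤ (j : ℕ)

lemma mem_Suf {m : ℕ} {j : Fin n} : j ∈ Suf n m ↔ m ≤ (j : ℕ) := by simp [Suf]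

lemma Suf_zero : Suf n 0 = Finset.univ := by
  ext j; simp [mem_Suf]

lemma Suf_of_le {m : ℕ} (h : n ≤ m) : Suf n m = ∅ := by
  ext j
  simp only [mem_Suf, Finset.notMem_empty, iff_false]
  have := j.isLt
  omega

lemma Suf_succ_subset {m : ℕ} : Suf n (m+1) ⊆ Suf n m := fun j hj => by
  rw [mem_Suf] at *; omega

lemma Suf_insert {m : ℕ} (hm : m < n) :
    Suf n m = insert (⟨m, hm⟩ : Fin n) (Suf n (m+1)) := by
  ext j
  simp only [mem_Suf, Finset.mem_insert, Fin.ext_iff]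
  omega

lemma not_mem_Suf_succ {m : ℕ} (hm : m < n) : (⟨m, hm⟩ : Fin n) ∉ Suf n (m+1) := by
  rw [mem_Suf]
  show ¬ (m + 1 ≤ m)
  omega

lemma sum_Suf_succ {m : ℕ} (hm : m < n) (b : Fin n → ℤ) :
    ∑ j ∈ Suf n m, b j = b ⟨m, hm⟩ + ∑ j ∈ Suf n (m+1), b j := by
  rw [Suf_insert hm, Finset.sum_insert (not_mem_Suf_succ hm)]

lemma down_ind (P : ℕ → Prop) (base : ∀ m, n ≤ m → P m)
    (step : ∀ m, m < n → P (m+1) → P m) : ∀ m, P m := by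
  have key : ∀ d m, n ≤ m + d → P m := by
    intro d
    induction d with
    | zero => exact fun m hm => base m (by omega)
    | succ d ih =>
      intro m hm
      by_cases h : n ≤ m + d
      · exact ih m h
      · exact step m (by omega) (ih (m+1) (by omega))
  exact fun m => key n m (by omega)

lemma suffix_tight (hf0 : f ∅ = 0)
    (hmono : ∀ I J : Finset (Fin n), I ⊆ J → f I ≤ f J)
    (hsub : ∀ I J : Finset (Fin n), f (I ∪ J) + f (I ∩ J) ≤ f I + f J)
    (ha : a ∈ PB n f) (i : Fin n)
    (hact : ∀ k : Fin n, i < k → ¬ Inact f a k) :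
    ∀ m : ℕ, (i : ℕ) < m → Tight f a (Suf n m) := by
  refine down_ind _ (fun m hm _ => by rw [Suf_of_le hm]; exact tight_empty hf0)
    (fun m hmn ih him => ?_)
  have hsufm1 : Tight f a (Suf n (m+1)) := ih (by omega)
  set k : Fin n := ⟨m, hmn⟩ with hk
  have hik : i < k := by rw [Fin.lt_def]; exact him
  have hkact := hact k hik
  rw [inact_iff ha] at hkact
  push_neg at hkact
  have hzero : ∀ j ∈ Tmin f a k, j ≠ k → (j : ℕ) ≤ m → a j = 0 := by
    intro j hjT hjk hjm
    have hjlt : j < k := by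
      have h' : (j : ℕ) ≠ m := fun h => hjk (Fin.ext (show (j:ℕ) = (k:ℕ) from h))
      rw [Fin.lt_def]
      show (j : ℕ) < m
      omega
    by_contra hne
    have h1 : 1 ≤ a j := by have := PB_nonneg ha j; omega
    obtain ⟨I, hI, hkI, hjI⟩ := hkact j hjlt h1
    exact hjI (Tmin_subset hI hkI hjT)
  set W := Tmin f a k ∪ Suf n (m+1) with hW
  have hWt : Tight f a W :=
    tight_union hsub ha (tight_Tmin hsub ha k) hsufm1
  have hsubW : Suf n (m+1) ⊆ W := Finset.subset_union_right
  have hWdiff : ∑ j ∈ W \ Suf n (m+1), a j = a k := by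
    have hkW : k ∈ W \ Suf n (m+1) := by
      rw [Finset.mem_sdiff]
      exact ⟨Finset.mem_union_left _ (mem_Tmin_self ha k), not_mem_Suf_succ hmn⟩
    rw [← Finset.add_sum_erase _ _ hkW]
    have : ∑ j ∈ (W \ Suf n (m+1)).erase k, a j = 0 := by
      refine Finset.sum_eq_zero fun j hj => ?_
      rw [Finset.mem_erase, Finset.mem_sdiff] at hj
      obtain ⟨hjk, hjW, hjS⟩ := hj
      rw [mem_Suf] at hjS
      have hjT : j ∈ Tmin f a k := by
        rcases Finset.mem_union.mp hjW with h | h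
        · exact h
        · exact absurd (mem_Suf.mp h) hjS
      exact hzero j hjT hjk (by omega)
    omega
  have hsumW : ∑ j ∈ W, a j = a k + (f (Suf n (m+1)) : ℤ) := by
    rw [← Finset.sum_sdiff hsubW, hWdiff, hsufm1]
  have hsum_m : ∑ j ∈ Suf n m, a j = a k + (f (Suf n (m+1)) : ℤ) := by
    rw [sum_Suf_succ hmn, hsufm1]
  have hSW : Suf n m ⊆ W := by
    intro j hj
    rw [mem_Suf] at hj
    rcases eq_or_lt_of_le hj with h | h
    · have : j = k := Fin.ext h.symm
      rw [this]
      exact Finset.mem_union_left _ (mem_Tmin_self ha k)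
    · exact hsubW (mem_Suf.mpr (by omega))
  have hmono' : (f (Suf n m) : ℤ) ≤ (f W : ℤ) := by exact_mod_cast hmono _ _ hSW
  have hle := PB_le ha (Suf n m)
  rw [Tight] at hWt ⊢
  omega

/-- The greedy basis. -/
noncomputable def gvec (f : Finset (Fin n) → ℕ) : Fin n → ℤ :=
  fun k => (f (Suf n k) : ℤ) - f (Suf n ((k : ℕ) + 1))

lemma sum_gvec (hf0 : f ∅ = 0) : ∀ m, ∑ j ∈ Suf n m, gvec f j = (f (Suf n m) : ℤ) := by
  refine down_ind _ (fun m hm => by rw [Suf_of_le hm]; simp [hf0]) (fun m hmn ih => ?_)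
  rw [sum_Suf_succ hmn, ih]
  show ((f (Suf n m) : ℤ) - f (Suf n (m + 1))) + (f (Suf n (m+1)) : ℤ) = (f (Suf n m) : ℤ)
  ring

lemma sum_gvec_le (hf0 : f ∅ = 0)
    (hsub : ∀ I J : Finset (Fin n), f (I ∪ J) + f (I ∩ J) ≤ f I + f J)
    (I : Finset (Fin n)) : ∑ k ∈ I, gvec f k ≤ (f I : ℤ) := by
  have hpt : ∀ k ∈ I, gvec f k ≤ (f (I ∩ Suf n k) : ℤ) - f (I ∩ Suf n ((k : ℕ) + 1)) := by
    intro k hkI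
    have hAB : (I ∩ Suf n (k : ℕ)) ∪ Suf n ((k : ℕ)+1) = Suf n (k : ℕ) := by
      ext j
      simp only [Finset.mem_union, Finset.mem_inter, mem_Suf]
      constructor
      · rintro (⟨_, h⟩ | h) <;> omega
      · intro h
        rcases eq_or_lt_of_le h with h' | h'
        · exact Or.inl ⟨by rwa [show j = k from Fin.ext h'.symm], h⟩
        · exact Or.inr (by omega)
    have hABi : (I ∩ Suf n (k : ℕ)) ∩ Suf n ((k : ℕ)+1) = I ∩ Suf n ((k : ℕ)+1) := by
      ext j
      simp only [Finset.mem_inter, mem_Suf]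
      constructor
      · rintro ⟨⟨h1, _⟩, h3⟩; exact ⟨h1, h3⟩
      · rintro ⟨h1, h2⟩; exact ⟨⟨h1, by omega⟩, h2⟩
    have := hsub (I ∩ Suf n (k : ℕ)) (Suf n ((k : ℕ)+1))
    rw [hAB, hABi] at this
    unfold gvec
    have : (f (Suf n (k:ℕ)) : ℤ) + f (I ∩ Suf n ((k:ℕ)+1)) ≤
        (f (I ∩ Suf n (k:ℕ)) : ℤ) + f (Suf n ((k:ℕ)+1)) := by exact_mod_cast this
    omega
  have h1 : ∑ k ∈ I, gvec f k ≤
      ∑ k ∈ I, ((f (I ∩ Suf n (k : ℕ)) : ℤ) - f (I ∩ Suf n ((k : ℕ) + 1))) :=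
    Finset.sum_le_sum hpt
  have h2 : ∑ k ∈ I, ((f (I ∩ Suf n (k : ℕ)) : ℤ) - f (I ∩ Suf n ((k : ℕ) + 1)))
      = ∑ k : Fin n, ((f (I ∩ Suf n (k : ℕ)) : ℤ) - f (I ∩ Suf n ((k : ℕ) + 1))) := by
    refine Finset.sum_subset (Finset.subset_univ I) fun k _ hkI => ?_
    have : I ∩ Suf n (k : ℕ) = I ∩ Suf n ((k : ℕ) + 1) := by
      ext j
      simp only [Finset.mem_inter, mem_Suf]
      constructor
      · rintro ⟨h1, h2⟩
        refine ⟨h1, ?_⟩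
        rcases eq_or_lt_of_le h2 with h' | h'
        · exact absurd (by rwa [show j = k from Fin.ext h'.symm] at h1) hkI
        · omega
      · rintro ⟨h1, h2⟩; exact ⟨h1, by omega⟩
    rw [this]; ring
  have h3 : ∑ k : Fin n, ((f (I ∩ Suf n (k : ℕ)) : ℤ) - f (I ∩ Suf n ((k : ℕ) + 1)))
      = ∑ m ∈ Finset.range n, ((f (I ∩ Suf n m) : ℤ) - f (I ∩ Suf n (m + 1))) :=
    Fin.sum_univ_eq_sum_range (fun m => ((f (I ∩ Suf n m) : ℤ) - f (I ∩ Suf n (m + 1)))) n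
  have h4 : ∑ m ∈ Finset.range n, ((f (I ∩ Suf n m) : ℤ) - f (I ∩ Suf n (m + 1)))
      = (f (I ∩ Suf n 0) : ℤ) - f (I ∩ Suf n n) :=
    Finset.sum_range_sub' (fun m => (f (I ∩ Suf n m) : ℤ)) n
  rw [h2, h3, h4, Suf_zero, Suf_of_le (le_refl n)] at h1
  simpa [hf0] using h1

lemma gvec_mem_PB (hf0 : f ∅ = 0)
    (hmono : ∀ I J : Finset (Fin n), I ⊆ J → f I ≤ f J)
    (hsub : ∀ I J : Finset (Fin n), f (I ∪ J) + f (I ∩ J) ≤ f I + f J) :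
    gvec f ∈ PB n f := by
  rw [mem_PB_iff]
  refine ⟨fun k => ?_, sum_gvec_le hf0 hsub, ?_⟩
  · unfold gvec
    have : f (Suf n ((k : ℕ) + 1)) ≤ f (Suf n (k : ℕ)) := hmono _ _ Suf_succ_subset
    have : (f (Suf n ((k : ℕ) + 1)) : ℤ) ≤ f (Suf n (k : ℕ)) := by exact_mod_cast this
    omega
  · have := sum_gvec (f := f) hf0 0
    rwa [Suf_zero] at this

lemma gvec_active (hf0 : f ∅ = 0)
    (hmono : ∀ I J : Finset (Fin n), I ⊆ J → f I ≤ f J)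
    (hsub : ∀ I J : Finset (Fin n), f (I ∪ J) + f (I ∩ J) ≤ f I + f J)
    (k : Fin n) : ¬ Inact f (gvec f) k := by
  have hg := gvec_mem_PB hf0 hmono hsub
  rw [inact_iff hg]
  rintro ⟨j, hjk, _, hall⟩
  have htight : Tight f (gvec f) (Suf n (k : ℕ)) := sum_gvec hf0 (k : ℕ)
  have hkmem : k ∈ Suf n (k : ℕ) := mem_Suf.mpr le_rfl
  have := hall _ htight hkmem
  rw [mem_Suf] at this
  rw [Fin.lt_def] at hjk
  omega

lemma eq_gvec_of_suffix_tight (ha : a ∈ PB n f)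
    (h : ∀ m, Tight f a (Suf n m)) : a = gvec f := by
  funext k
  have h1 : ∑ j ∈ Suf n (k : ℕ), a j = a k + ∑ j ∈ Suf n ((k : ℕ) + 1), a j := by
    have := sum_Suf_succ (b := a) k.isLt
    simpa using this
  have h2 := h (k : ℕ)
  have h3 := h ((k : ℕ) + 1)
  rw [Tight] at h2 h3
  unfold gvec
  omega

lemma root_unique (hf0 : f ∅ = 0)
    (hmono : ∀ I J : Finset (Fin n), I ⊆ J → f I ≤ f J)
    (hsub : ∀ I J : Finset (Fin n), f (I ∪ J) + f (I ∩ J) ≤ f I + f J)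
    (hn : 0 < n) (ha : a ∈ PB n f) (hact : ∀ k, ¬ Inact f a k) : a = gvec f := by
  refine eq_gvec_of_suffix_tight ha fun m => ?_
  rcases Nat.eq_zero_or_pos m with rfl | hm
  · rw [Suf_zero]; exact tight_univ ha
  · exact suffix_tight hf0 hmono hsub ha ⟨0, hn⟩ (fun k _ => hact k) m hm

/-! ### The down-step -/

lemma tight_sup (hf0 : f ∅ = 0)
    (hsub : ∀ I J : Finset (Fin n), f (I ∪ J) + f (I ∩ J) ≤ f I + f J)
    (ha : a ∈ PB n f) {s : Finset (Fin n)} {C : Fin n → Finset (Fin n)}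
    (hC : ∀ j ∈ s, Tight f a (C j)) : Tight f a (s.sup C) := by
  induction s using Finset.induction_on with
  | empty => simpa using tight_empty hf0
  | @insert x s hx ih =>
    rw [Finset.sup_insert]
    have h1 : Tight f a (C x) := hC x (Finset.mem_insert_self x s)
    have h2 : Tight f a (s.sup C) := ih fun j hj => hC j (Finset.mem_insert_of_mem hj)
    exact tight_union hsub ha h1 h2

lemma down_step (hf0 : f ∅ = 0)
    (hmono : ∀ I J : Finset (Fin n), I ⊆ J → f I ≤ f J)
    (hsub : ∀ I J : Finset (Fin n), f (I ∪ J) + f (I ∩ J) ≤ f I + f J)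
    (ha : a ∈ PB n f) (i : Fin n)
    (hact : ∀ k, k ≠ i → ¬ Inact f a k)
    (hv : (f Finset.univ : ℤ) - f (Finset.univ \ {i}) < a i) :
    ∃ a', a' ∈ PB n f ∧ (∀ k, k ≠ i → ¬ Inact f a' k) ∧ a' i = a i - 1 := by
  have hmi : (0:ℤ) ≤ (f Finset.univ : ℤ) - f (Finset.univ \ {i}) := by
    have := hmono (Finset.univ \ {i}) Finset.univ (Finset.sdiff_subset)
    have : (f (Finset.univ \ {i}) : ℤ) ≤ f Finset.univ := by exact_mod_cast this
    omega
  have hai1 : 1 ≤ a i := by omega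
  have hSuf : ∀ m, (i : ℕ) < m → Tight f a (Suf n m) :=
    suffix_tight hf0 hmono hsub ha i (fun k hk => hact k hk.ne')
  have hgetC : ∀ k, k ≠ i → ∀ l, l < k → 1 ≤ a l →
      ∃ C, Tight f a C ∧ k ∈ C ∧ l ∉ C := by
    intro k hk l h1 h2
    have hI := hact k hk
    rw [inact_iff ha] at hI
    push_neg at hI
    exact hI l h1 h2
  -- existence of a feasible pivot below `i`
  have hex : ∃ j, j < i ∧ ∀ I, Tight f a I → j ∈ I → i ∈ I := by
    by_contra h
    push_neg at h
    have h' : ∀ j, j < i → ∃ I, Tight f a I ∧ j ∈ I ∧ i ∉ I := h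
    classical
    set C : Fin n → Finset (Fin n) := fun j =>
      if hj : j < i then (h' j hj).choose else ∅ with hCdef
    have hCt : ∀ j, Tight f a (C j) := by
      intro j
      simp only [hCdef]
      by_cases hj : j < i
      · rw [dif_pos hj]; exact (h' j hj).choose_spec.1
      · rw [dif_neg hj]; exact tight_empty hf0
    have hCmem : ∀ j, j < i → j ∈ C j := by
      intro j hj
      simp only [hCdef]; rw [dif_pos hj]; exact (h' j hj).choose_spec.2.1
    have hCnoti : ∀ j, i ∉ C j := by
      intro j
      simp only [hCdef]
      by_cases hj : j < i
      · rw [dif_pos hj]; exact (h' j hj).choose_spec.2.2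
      · rw [dif_neg hj]; exact Finset.notMem_empty i
    set W := ((Finset.univ.filter (· < i)).sup C) ∪ Suf n ((i:ℕ)+1) with hWdef
    have hWt : Tight f a W := by
      refine tight_union hsub ha (tight_sup hf0 hsub ha fun j _ => hCt j) ?_
      exact hSuf _ (by omega)
    have hWeq : W = Finset.univ \ {i} := by
      ext k
      rw [hWdef]
      constructor
      · intro hkW
        rcases Finset.mem_union.mp hkW with h | h
        · obtain ⟨j, _, hkj⟩ := Finset.mem_sup.mp h
          refine Finset.mem_sdiff.mpr ⟨Finset.mem_univ k, ?_⟩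
          rw [Finset.mem_singleton]
          rintro rfl
          exact hCnoti j hkj
        · refine Finset.mem_sdiff.mpr ⟨Finset.mem_univ k, ?_⟩
          rw [Finset.mem_singleton]
          rintro rfl
          rw [mem_Suf] at h
          omega
      · intro hkW
        obtain ⟨-, hki⟩ := Finset.mem_sdiff.mp hkW
        rw [Finset.mem_singleton] at hki
        rcases lt_trichotomy k i with h | h | h
        · exact Finset.mem_union_left _
            (Finset.mem_sup.mpr ⟨k, Finset.mem_filter.mpr ⟨Finset.mem_univ k, h⟩, hCmem k h⟩)
        · exact absurd h hki
        · refine Finset.mem_union_right _ (mem_Suf.mpr ?_)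
          rw [Fin.lt_def] at h
          omega
    rw [hWeq, Tight] at hWt
    have huniv := PB_sum ha
    have hsplit : a i + ∑ j ∈ Finset.univ \ {i}, a j = ∑ j, a j := by
      have heq : (Finset.univ \ {i} : Finset (Fin n)) = Finset.univ.erase i :=
        Finset.sdiff_singleton_eq_erase i Finset.univ
      rw [heq]
      exact Finset.add_sum_erase _ a (Finset.mem_univ i)
    omega
  obtain ⟨j0, hj0⟩ := hex
  set js := Finset.univ.filter (fun j => j < i ∧ ∀ I, Tight f a I → j ∈ I → i ∈ I)
    with hjsdef
  have hjsne : js.Nonempty := ⟨j0, by simp only [hjsdef, Finset.mem_filter]; exact ⟨Finset.mem_univ _, hj0⟩⟩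
  set jst := js.max' hjsne with hjstdef
  have hjstmem : jst < i ∧ ∀ I, Tight f a I → jst ∈ I → i ∈ I :=
    (Finset.mem_filter.mp (js.max'_mem hjsne)).2
  obtain ⟨hjlt, hjkey⟩ := hjstmem
  have hjne : jst ≠ i := hjlt.ne
  have hKF2 : ∀ k, jst < k → k < i → ∃ I, Tight f a I ∧ k ∈ I ∧ i ∉ I := by
    intro k h1 h2
    by_contra h
    push_neg at h
    have hkjs : k ∈ js := by
      rw [hjsdef, Finset.mem_filter]
      exact ⟨Finset.mem_univ _, h2, h⟩
    have := js.le_max' k hkjs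
    rw [← hjstdef] at this
    exact absurd h1 (not_lt.mpr this)
  set a' : Fin n → ℤ := a + Pi.single jst 1 - Pi.single i 1 with ha'def
  have ha' : a' ∈ PB n f := (move_mem_iff ha hjne).mpr ⟨hai1, hjkey⟩
  have ha'app : ∀ x, a' x = a x + (if x = jst then 1 else 0) - (if x = i then 1 else 0) := by
    intro x
    rw [ha'def]
    simp [Pi.single_apply]
  have htrans : ∀ I, Tight f a I → (i ∈ I ↔ jst ∈ I) → Tight f a' I := by
    intro I hI hiff
    rw [Tight] at hI ⊢
    rw [ha'def, sum_move]
    by_cases h : i ∈ I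
    · rw [if_pos (hiff.mp h), if_pos h]; omega
    · rw [if_neg (fun hj => h (hiff.mpr hj)), if_neg h]; omega
  -- the minimal tight set of jst
  have hTst : Tight f a (Tmin f a jst) := tight_Tmin hsub ha jst
  have hiTst : i ∈ Tmin f a jst := (mem_Tmin_iff hsub ha).mpr hjkey
  have hjTst : jst ∈ Tmin f a jst := mem_Tmin_self ha jst
  have hlT : ∀ l, l < jst → 1 ≤ a l → l ∉ Tmin f a jst := by
    intro l h1 h2 hmem
    obtain ⟨C, hC, hjC, hlC⟩ := hgetC jst hjne l h1 h2
    exact hlC (Tmin_subset hC hjC hmem)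
  refine ⟨a', ha', ?_, by rw [ha'app]; simp [hjne.symm]⟩
  intro k hki
  rw [inact_iff ha']
  rintro ⟨l, hlk, hl1, hlall⟩
  have hdone : ∀ I, Tight f a' I → k ∈ I → l ∉ I → False := fun I h1 h2 h3 =>
    h3 (hlall I h1 h2)
  rcases Ne.lt_or_gt hki with hik | hik
  · -- k < i
    have hli : l ≠ i := (hlk.trans hik).ne
    rcases le_or_gt k jst with hkj | hkj
    · -- k ≤ jst
      have hlj : l ≠ jst := (lt_of_lt_of_le hlk hkj).ne
      have hal : 1 ≤ a l := by
        have := ha'app l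
        rw [if_neg hlj, if_neg hli] at this
        omega
      obtain ⟨C, hC, hkC, hlC⟩ := hgetC k hki l hlk hal
      by_cases hCij : i ∈ C ∨ jst ∈ C
      · have ht : Tight f a (C ∪ Tmin f a jst) := tight_union hsub ha hC hTst
        have ht' : Tight f a' (C ∪ Tmin f a jst) := by
          refine htrans _ ht ?_
          constructor
          · intro _; exact Finset.mem_union_right _ hjTst
          · intro _; exact Finset.mem_union_right _ hiTst
        refine hdone _ ht' (Finset.mem_union_left _ hkC) ?_
        rw [Finset.mem_union]
        rintro (h | h)
        · exact hlC h
        · exact hlT l (lt_of_lt_of_le hlk hkj) hal h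
      · push_neg at hCij
        refine hdone _ (htrans _ hC ?_) hkC hlC
        constructor
        · intro h; exact absurd h hCij.1
        · intro h; exact absurd h hCij.2
    · -- jst < k < i
      obtain ⟨I0, hI0, hkI0, hiI0⟩ := hKF2 k hkj hik
      have hiTk : i ∉ Tmin f a k := fun h => hiI0 (Tmin_subset hI0 hkI0 h)
      have hjTk : jst ∉ Tmin f a k := fun h =>
        hiTk (hjkey _ (tight_Tmin hsub ha k) h)
      have ht' : Tight f a' (Tmin f a k) := by
        refine htrans _ (tight_Tmin hsub ha k) ?_
        constructor
        · intro h; exact absurd h hiTk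
        · intro h; exact absurd h hjTk
      refine hdone _ ht' (mem_Tmin_self ha k) ?_
      by_cases hlj : l = jst
      · rw [hlj]; exact hjTk
      · have hal : 1 ≤ a l := by
          have := ha'app l
          rw [if_neg hlj, if_neg hli] at this
          omega
        obtain ⟨C, hC, hkC, hlC⟩ := hgetC k hki l hlk hal
        exact fun h => hlC (Tmin_subset hC hkC h)
  · -- i < k
    have hSt : Tight f a (Suf n ((i:ℕ)+1)) := hSuf _ (by omega)
    have hkS : k ∈ Suf n ((i:ℕ)+1) := by
      rw [mem_Suf]
      rw [Fin.lt_def] at hik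
      omega
    have hiS : i ∉ Suf n ((i:ℕ)+1) := by rw [mem_Suf]; omega
    have hjS : jst ∉ Suf n ((i:ℕ)+1) := by
      rw [mem_Suf]
      rw [Fin.lt_def] at hjlt hik
      omega
    by_cases hlj : l = jst
    · have ht' : Tight f a' (Suf n ((i:ℕ)+1)) := by
        refine htrans _ hSt ?_
        constructor
        · intro h; exact absurd h hiS
        · intro h; exact absurd h hjS
      refine hdone _ ht' hkS ?_
      rw [hlj]; exact hjS
    · have hal : 1 ≤ a l := by
        have := ha'app l
        rw [if_neg hlj] at this
        by_cases hli : l = i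
        · rw [if_pos hli] at this; omega
        · rw [if_neg hli] at this; omega
      obtain ⟨C, hC, hkC, hlC⟩ := hgetC k hki l hlk hal
      have ht : Tight f a (C ∩ Suf n ((i:ℕ)+1)) := tight_inter hsub ha hC hSt
      have ht' : Tight f a' (C ∩ Suf n ((i:ℕ)+1)) := by
        refine htrans _ ht ?_
        constructor
        · intro h; exact absurd (Finset.mem_inter.mp h).2 hiS
        · intro h; exact absurd (Finset.mem_inter.mp h).2 hjS
      refine hdone _ ht' (Finset.mem_inter.mpr ⟨hkC, hkS⟩) ?_
      exact fun h => hlC (Finset.mem_inter.mp h).1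

/-! ### Counting -/

lemma sum_sdiff_singleton (b : Fin n → ℤ) (i : Fin n) :
    b i + ∑ j ∈ Finset.univ \ {i}, b j = ∑ j, b j := by
  have heq : (Finset.univ \ {i} : Finset (Fin n)) = Finset.univ.erase i :=
    Finset.sdiff_singleton_eq_erase i Finset.univ
  rw [heq]
  exact Finset.add_sum_erase _ b (Finset.mem_univ i)

lemma ai_lower (ha : a ∈ PB n f) (i : Fin n) :
    (f Finset.univ : ℤ) - f (Finset.univ \ {i}) ≤ a i := by
  have h1 := PB_le ha (Finset.univ \ {i})
  have h2 := PB_sum ha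
  have h3 := sum_sdiff_singleton a i
  omega

lemma card_G (hf0 : f ∅ = 0)
    (hmono : ∀ I J : Finset (Fin n), I ⊆ J → f I ≤ f J)
    (hsub : ∀ I J : Finset (Fin n), f (I ∪ J) + f (I ∩ J) ≤ f I + f J)
    (i : Fin n) :
    ((((PB n f).filter (fun a => ∀ k, k ≠ i → ¬ Inact f a k)).card) : ℤ)
      = ((f (Suf n (i:ℕ)) : ℤ) - f (Suf n ((i:ℕ)+1)))
        - ((f Finset.univ : ℤ) - f (Finset.univ \ {i})) + 1 := by
  set lo : ℤ := (f Finset.univ : ℤ) - f (Finset.univ \ {i}) with hlo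
  set hi : ℤ := (f (Suf n (i:ℕ)) : ℤ) - f (Suf n ((i:ℕ)+1)) with hhi
  have hU : Suf n (i:ℕ) ∪ (Finset.univ \ {i}) = Finset.univ := by
    ext j
    simp only [Finset.mem_union, mem_Suf, Finset.mem_sdiff, Finset.mem_univ, true_and,
      Finset.mem_singleton, iff_true]
    by_cases h : j = i
    · exact Or.inl (le_of_eq (by rw [h]))
    · exact Or.inr h
  have hI : Suf n (i:ℕ) ∩ (Finset.univ \ {i}) = Suf n ((i:ℕ)+1) := by
    ext j
    simp only [Finset.mem_inter, mem_Suf, Finset.mem_sdiff, Finset.mem_univ, true_and,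
      Finset.mem_singleton, Fin.ext_iff]
    omega
  have hlohi : lo ≤ hi := by
    have := hsub (Suf n (i:ℕ)) (Finset.univ \ {i})
    rw [hU, hI] at this
    have : (f Finset.univ : ℤ) + f (Suf n ((i:ℕ)+1))
        ≤ (f (Suf n (i:ℕ)) : ℤ) + f (Finset.univ \ {i}) := by exact_mod_cast this
    rw [hlo, hhi]
    omega
  have hmem : ∀ a, a ∈ (PB n f).filter (fun a => ∀ k, k ≠ i → ¬ Inact f a k) ↔
      a ∈ PB n f ∧ ∀ k, k ≠ i → ¬ Inact f a k := fun a => Finset.mem_filter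
  have hcard : ((PB n f).filter (fun a => ∀ k, k ≠ i → ¬ Inact f a k)).card
      = (Finset.Icc lo hi).card := by
    refine Finset.card_bij (fun a _ => a i) ?_ ?_ ?_
    · intro a ha
      rw [hmem] at ha
      obtain ⟨haPB, hact⟩ := ha
      show a i ∈ Finset.Icc lo hi
      rw [Finset.mem_Icc]
      refine ⟨ai_lower haPB i, ?_⟩
      have hSuft : Tight f a (Suf n ((i:ℕ)+1)) :=
        suffix_tight hf0 hmono hsub haPB i (fun k hk => hact k hk.ne') _ (by omega)
      have hle := PB_le haPB (Suf n (i:ℕ))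
      have hsum := sum_Suf_succ (b := a) i.isLt
      rw [Fin.eta] at hsum
      rw [Tight] at hSuft
      rw [hhi]
      omega
    · intro a1 ha1 a2 ha2 heq
      rw [hmem] at ha1 ha2
      have heq' : a1 i = a2 i := heq
      exact eq_of_almost_active hsub ha1.1 ha2.1 i ha1.2 ha2.2 heq'
    · intro v hv
      rw [Finset.mem_Icc] at hv
      have key : ∀ d : ℕ, lo ≤ hi - d →
          ∃ a, ∃ ha : a ∈ (PB n f).filter (fun a => ∀ k, k ≠ i → ¬ Inact f a k),
            a i = hi - d := by
        intro d
        induction d with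
        | zero =>
          intro _
          refine ⟨gvec f, Finset.mem_filter.mpr ⟨gvec_mem_PB hf0 hmono hsub,
            fun k _ => gvec_active hf0 hmono hsub k⟩, ?_⟩
          show (f (Suf n (i:ℕ)) : ℤ) - f (Suf n ((i:ℕ)+1)) = hi - (0:ℕ)
          rw [hhi]
          simp
        | succ d ih =>
          intro hd
          obtain ⟨a, haf, hai⟩ := ih (by push_cast at hd ⊢; omega)
          rw [hmem] at haf
          obtain ⟨a', ha', hact', hai'⟩ := down_step hf0 hmono hsub haf.1 i haf.2
            (by rw [hai, ← hlo]; push_cast at hd ⊢; omega)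
          refine ⟨a', Finset.mem_filter.mpr ⟨ha', hact'⟩, ?_⟩
          rw [hai', hai]
          push_cast
          ring
      have hd0 : (0:ℤ) ≤ hi - v := by omega
      obtain ⟨a, ha, hai⟩ := key (hi - v).toNat
        (by rw [Int.toNat_of_nonneg hd0]; omega)
      refine ⟨a, ha, ?_⟩
      show a i = v
      rw [hai, Int.toNat_of_nonneg hd0]
      ring
  rw [hcard, Int.card_Icc]
  rw [Int.toNat_of_nonneg (by omega)]
  ring

lemma root_eq (hf0 : f ∅ = 0)
    (hmono : ∀ I J : Finset (Fin n), I ⊆ J → f I ≤ f J)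
    (hsub : ∀ I J : Finset (Fin n), f (I ∪ J) + f (I ∩ J) ≤ f I + f J)
    (hn : 0 < n) :
    (PB n f).filter (fun a => ∀ k, ¬ Inact f a k) = {gvec f} := by
  ext a
  rw [Finset.mem_filter, Finset.mem_singleton]
  constructor
  · rintro ⟨ha, hact⟩
    exact root_unique hf0 hmono hsub hn ha hact
  · rintro rfl
    exact ⟨gvec_mem_PB hf0 hmono hsub, fun k => gvec_active hf0 hmono hsub k⟩

lemma card_H (hf0 : f ∅ = 0)
    (hmono : ∀ I J : Finset (Fin n), I ⊆ J → f I ≤ f J)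
    (hsub : ∀ I J : Finset (Fin n), f (I ∪ J) + f (I ∩ J) ≤ f I + f J)
    (hn : 0 < n) (i : Fin n) :
    ((((PB n f).filter (fun a => Finset.univ.filter (fun k => Inact f a k) = {i})).card) : ℤ)
      = ((f (Suf n (i:ℕ)) : ℤ) - f (Suf n ((i:ℕ)+1)))
        - ((f Finset.univ : ℤ) - f (Finset.univ \ {i})) := by
  have hsplit := Finset.card_filter_add_card_filter_not
    (s := (PB n f).filter (fun a => ∀ k, k ≠ i → ¬ Inact f a k))
    (p := fun a => Inact f a i)
  have h1 : ((PB n f).filter (fun a => ∀ k, k ≠ i → ¬ Inact f a k)).filter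
      (fun a => Inact f a i)
      = (PB n f).filter (fun a => Finset.univ.filter (fun k => Inact f a k) = {i}) := by
    rw [Finset.filter_filter]
    refine Finset.filter_congr fun a _ => ?_
    constructor
    · rintro ⟨hall, hin⟩
      ext k
      rw [Finset.mem_filter, Finset.mem_singleton]
      constructor
      · rintro ⟨-, hk⟩
        by_contra hki
        exact hall k hki hk
      · rintro rfl
        exact ⟨Finset.mem_univ k, hin⟩
    · intro hset
      constructor
      · intro k hki hk
        have : k ∈ ({i} : Finset (Fin n)) := by
          rw [← hset, Finset.mem_filter]
          exact ⟨Finset.mem_univ k, hk⟩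
        exact hki (Finset.mem_singleton.mp this)
      · have : i ∈ ({i} : Finset (Fin n)) := Finset.mem_singleton_self i
        rw [← hset, Finset.mem_filter] at this
        exact this.2
  have h2 : ((PB n f).filter (fun a => ∀ k, k ≠ i → ¬ Inact f a k)).filter
      (fun a => ¬ Inact f a i) = {gvec f} := by
    rw [Finset.filter_filter, ← root_eq hf0 hmono hsub hn]
    refine Finset.filter_congr fun a _ => ?_
    constructor
    · rintro ⟨hall, hnoti⟩ k
      by_cases hk : k = i
      · rwa [hk]
      · exact hall k hk
    · intro hall
      exact ⟨fun k _ => hall k, hall i⟩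
  rw [h1, h2, Finset.card_singleton] at hsplit
  have hG := card_G hf0 hmono hsub i
  omega

end PolyAux

open scoped Classical in
/-- The coefficient of `y^(n-1)` in `J_P(1,y)`, i.e. the number of bases with
`ε(a) = n - 1`, equals `Σ_i f([n] ∖ {i}) - (n-1)·f([n])`. -/
theorem coeff_subtop_ext
    (n : ℕ) (hn : 0 < n) (f : Finset (Fin n) → ℕ)
    (hf0 : f ∅ = 0)
    (hmono : ∀ I J : Finset (Fin n), I ⊆ J → f I ≤ f J)
    (hsub : ∀ I J : Finset (Fin n), f (I ∪ J) + f (I ∩ J) ≤ f I + f J) :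
    (((PB n f).filter fun a => eps f a = n - 1).card : ℤ) =
      (∑ i : Fin n, (f (Finset.univ \ {i}) : ℤ)) - ((n : ℤ) - 1) * (f Finset.univ : ℤ) := by
  classical
  have heps : ∀ a : Fin n → ℤ,
      (eps f a = n - 1 ↔ (Finset.univ.filter (fun k => PolyAux.Inact f a k)).card = 1) := by
    intro a
    have hcs : (Finset.univ.filter (fun k => ExtAct f a k)).card
        + (Finset.univ.filter (fun k => ¬ ExtAct f a k)).card = n := by
      rw [Finset.card_filter_add_card_filter_not]
      simp
    have h1 : eps f a = (Finset.univ.filter (fun k => ExtAct f a k)).card := by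
      unfold eps ExtSet
      congr 1
    have h2 : Finset.univ.filter (fun k => ¬ ExtAct f a k)
        = Finset.univ.filter (fun k => PolyAux.Inact f a k) :=
      Finset.filter_congr fun k _ => by
        rw [PolyAux.extAct_iff_not_inact, not_not]
    rw [h2] at hcs
    omega
  have hfilter : ((PB n f).filter fun a => eps f a = n - 1)
      = (PB n f).filter
          (fun a => (Finset.univ.filter (fun k => PolyAux.Inact f a k)).card = 1) :=
    Finset.filter_congr fun a _ => heps a
  rw [hfilter]
  have hdecomp : (PB n f).filter
      (fun a => (Finset.univ.filter (fun k => PolyAux.Inact f a k)).card = 1)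
      = Finset.univ.biUnion (fun i : Fin n => (PB n f).filter
          (fun a => Finset.univ.filter (fun k => PolyAux.Inact f a k) = {i})) := by
    ext a
    simp only [Finset.mem_filter, Finset.mem_biUnion, Finset.mem_univ, true_and]
    constructor
    · rintro ⟨haPB, hc⟩
      obtain ⟨i, hi⟩ := Finset.card_eq_one.mp hc
      exact ⟨i, haPB, hi⟩
    · rintro ⟨i, haPB, hi⟩
      exact ⟨haPB, by rw [hi]; exact Finset.card_singleton i⟩
  have hdisj : ∀ x ∈ (Finset.univ : Finset (Fin n)), ∀ y ∈ (Finset.univ : Finset (Fin n)),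
      x ≠ y → Disjoint
        ((PB n f).filter (fun a => Finset.univ.filter (fun k => PolyAux.Inact f a k) = {x}))
        ((PB n f).filter (fun a => Finset.univ.filter (fun k => PolyAux.Inact f a k) = {y})) := by
    intro x _ y _ hxy
    rw [Finset.disjoint_left]
    intro a hax hay
    rw [Finset.mem_filter] at hax hay
    exact hxy (Finset.singleton_injective (hax.2.symm.trans hay.2))
  rw [hdecomp, Finset.card_biUnion hdisj]
  push_cast
  rw [Finset.sum_congr rfl fun i _ => PolyAux.card_H hf0 hmono hsub hn i]
  have hgsum : ∑ i : Fin n,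
      ((f (PolyAux.Suf n (i:ℕ)) : ℤ) - f (PolyAux.Suf n ((i:ℕ)+1))) = (f Finset.univ : ℤ) := by
    have h := PolyAux.sum_gvec (f := f) hf0 0
    rw [PolyAux.Suf_zero] at h
    exact h
  rw [Finset.sum_sub_distrib, hgsum, Finset.sum_sub_distrib, Finset.sum_const,
    Finset.card_univ, Fintype.card_fin, nsmul_eq_mul]
  push_cast
  ring
end

section
/- Define a^max ∈ ℤ^n by a^max_k = f([k]) − f([k−1]) for each k ∈ [n] (where [0] = ∅). Then every basis b ∈ PB with b ≠ a^max satisfies ι(b) < n, i.e. some index of [n] is not internally active with respect to b. -/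
open Finset

variable {n : ℕ}

lemma tight_union_and_inter (f : Finset (Fin n) → ℕ)
    (hsub : ∀ I J : Finset (Fin n), f (I ∪ J) + f (I ∩ J) ≤ f I + f J)
    (b : Fin n → ℤ) (hcon : ∀ I : Finset (Fin n), ∑ j ∈ I, b j ≤ (f I : ℤ))
    {S T : Finset (Fin n)} (hS : Tight f b S) (hT : Tight f b T) :
    Tight f b (S ∪ T) ∧ Tight f b (S ∩ T) := by
  have h1 := hcon (S ∪ T)
  have h2 := hcon (S ∩ T)
  have key : ∑ j ∈ S ∪ T, b j + ∑ j ∈ S ∩ T, b j = ∑ j ∈ S, b j + ∑ j ∈ T, b j :=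
    Finset.sum_union_inter
  have hsub' : ((f (S ∪ T) : ℤ) + f (S ∩ T) ≤ (f S : ℤ) + f T) := by exact_mod_cast hsub S T
  unfold Tight at *
  constructor <;> linarith

lemma exchange_mem (f : Finset (Fin n) → ℕ) (b : Fin n → ℤ) (hb : b ∈ PB n f)
    {i k : Fin n} (hik : i ≠ k) (hbk : 0 < b k)
    (hnt : ∀ I : Finset (Fin n), i ∈ I → k ∉ I → ¬ Tight f b I) :
    b - Pi.single k 1 + Pi.single i 1 ∈ PB n f := by
  simp only [PB, Finset.mem_filter, Fintype.mem_piFinset, Finset.mem_Icc] at hb ⊢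
  obtain ⟨hbox, hcon, htot⟩ := hb
  have hsum : ∀ I : Finset (Fin n),
      ∑ j ∈ I, ((b - Pi.single k 1 + Pi.single i 1 : Fin n → ℤ)) j
        = ∑ j ∈ I, b j - (if k ∈ I then (1:ℤ) else 0) + (if i ∈ I then (1:ℤ) else 0) := by
    intro I
    simp [Finset.sum_add_distrib, Finset.sum_sub_distrib, Finset.sum_pi_single']
  have hstrict : ∀ I : Finset (Fin n), i ∈ I → k ∉ I → ∑ j ∈ I, b j + 1 ≤ (f I : ℤ) := by
    intro I hiI hkI
    have h1 := hcon I
    have h2 := hnt I hiI hkI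
    have : ∑ j ∈ I, b j < (f I : ℤ) := lt_of_le_of_ne h1 h2
    omega
  refine ⟨?_, ?_, ?_⟩
  · intro j
    simp only [Pi.add_apply, Pi.sub_apply, Pi.single_apply]
    have hbi : b i + 1 ≤ (f {i} : ℤ) := by
      have := hstrict {i} (Finset.mem_singleton_self i)
        (by simp [Finset.mem_singleton]; exact fun h => hik h.symm)
      simpa using this
    have h1 := (hbox j).1
    have h2 := (hbox j).2
    split_ifs with h3 h4 <;> try omega
    all_goals subst_vars
    · omega
    · constructor <;> [omega; simpa using hbi]
  · intro I
    rw [hsum I]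
    by_cases hiI : i ∈ I <;> by_cases hkI : k ∈ I <;>
      simp only [hiI, hkI, if_true, if_false] <;>
      first
        | (have := hcon I; omega)
        | (have := hstrict I hiI hkI; omega)
  · rw [hsum Finset.univ]
    simp [htot]

lemma tight_Iio (f : Finset (Fin n) → ℕ) (b : Fin n → ℤ) (hf0 : f ∅ = 0)
    {i : Fin n} (h : ∀ j : Fin n, j < i → Tight f b (Finset.Iic j)) :
    Tight f b (Finset.Iio i) := by
  rcases Nat.eq_zero_or_pos i.val with h0 | h0
  · have : Finset.Iio i = ∅ := by
      ext x; simp [Finset.mem_Iio, Fin.lt_def, h0]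
    simp [Tight, this, hf0]
  · have hlt : i.val - 1 < n := by omega
    set j : Fin n := ⟨i.val - 1, hlt⟩ with hj
    have : Finset.Iio i = Finset.Iic j := by
      ext x; simp only [Finset.mem_Iio, Finset.mem_Iic, Fin.lt_def, Fin.le_def, hj]; omega
    rw [this]
    exact h j (by simp [Fin.lt_def, hj]; omega)


/-- Every basis other than `a^max` (given by `a^max_k = f([k]) - f([k-1])`) has
internal activity less than `n`. -/
theorem iota_lt_of_ne_amax
    (n : ℕ) (hn : 0 < n) (f : Finset (Fin n) → ℕ)
    (hf0 : f ∅ = 0)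
    (hmono : ∀ I J : Finset (Fin n), I ⊆ J → f I ≤ f J)
    (hsub : ∀ I J : Finset (Fin n), f (I ∪ J) + f (I ∩ J) ≤ f I + f J)
    (b : Fin n → ℤ) (hb : b ∈ PB n f)
    (hne : b ≠ fun k : Fin n => (f (Finset.Iic k) : ℤ) - (f (Finset.Iio k) : ℤ)) :
    iota f b < n := by
  classical
  by_contra hlt
  push_neg at hlt
  -- all indices are internally active
  have hall : ∀ i : Fin n, IntAct f b i := by
    have hcard : (IntSet f b).card = Fintype.card (Fin n) := by
      have h1 : (IntSet f b).card ≤ Fintype.card (Fin n) := Finset.card_le_univ _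
      simp only [Fintype.card_fin] at h1 ⊢
      have h2 : n ≤ (IntSet f b).card := hlt
      omega
    have huniv : IntSet f b = Finset.univ := Finset.eq_univ_of_card _ hcard
    intro i
    have : i ∈ IntSet f b := huniv ▸ Finset.mem_univ i
    simpa [IntSet] using (Finset.mem_filter.mp this).2
  have hb' := hb
  simp only [PB, Finset.mem_filter, Fintype.mem_piFinset, Finset.mem_Icc] at hb'
  obtain ⟨hbox, hcon, htot⟩ := hb'
  have huniv_tight : Tight f b Finset.univ := htot
  -- every prefix Iic i is tight
  have key : ∀ m : ℕ, ∀ i : Fin n, i.val = m → Tight f b (Finset.Iic i) := by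
    intro m
    induction m using Nat.strong_induction_on with
    | _ m IH =>
      intro i him
      have hIio : Tight f b (Finset.Iio i) :=
        tight_Iio f b hf0 (fun j hj => IH j.val (by have := hj; rw [Fin.lt_def] at this; omega) j rfl)
      -- minimal tight set containing i
      set F : Finset (Finset (Fin n)) :=
        Finset.univ.filter (fun J : Finset (Fin n) => Tight f b J ∧ i ∈ J) with hF
      set T : Finset (Fin n) := F.inf id with hTdef
      have hT : Tight f b T ∧ i ∈ T := by
        rw [hTdef]
        refine Finset.inf_induction (p := fun S => Tight f b S ∧ i ∈ S) ?_ ?_ ?_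
        · exact ⟨huniv_tight, Finset.mem_univ i⟩
        · rintro S ⟨hS1, hS2⟩ S' ⟨hS1', hS2'⟩
          exact ⟨(tight_union_and_inter f hsub b hcon hS1 hS1').2,
            Finset.mem_inter.mpr ⟨hS2, hS2'⟩⟩
        · intro J hJ
          simpa [hF] using (Finset.mem_filter.mp hJ).2
      have hmin : ∀ S : Finset (Fin n), Tight f b S → i ∈ S → T ⊆ S := by
        intro S hS hiS
        have hSF : S ∈ F := by
          rw [hF]; exact Finset.mem_filter.mpr ⟨Finset.mem_univ S, hS, hiS⟩
        have : T ≤ id S := hTdef ▸ Finset.inf_le hSF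
        exact this
      -- elements of T above i carry zero
      have hz : ∀ k ∈ T, i < k → b k = 0 := by
        intro k hkT hik
        by_contra hk0
        have hbk : 0 < b k := lt_of_le_of_ne (hbox k).1 (Ne.symm hk0)
        have hik' : i ≠ k := ne_of_lt hik
        have hnt : ∀ I : Finset (Fin n), i ∈ I → k ∉ I → ¬ Tight f b I := by
          intro I hiI hkI hTI
          exact hkI (hmin I hTI hiI hkT)
        exact hall k i hik (exchange_mem f b hb hik' hbk hnt)
      set U : Finset (Fin n) := T ∪ Finset.Iio i with hU
      have hUt : Tight f b U := (tight_union_and_inter f hsub b hcon hT.1 hIio).1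
      have hsub1 : Finset.Iic i ⊆ U := by
        intro x hx
        rcases lt_or_eq_of_le (Finset.mem_Iic.mp hx) with h | h
        · exact Finset.mem_union_right _ (Finset.mem_Iio.mpr h)
        · exact Finset.mem_union_left _ (h ▸ hT.2)
      have heq : ∑ j ∈ Finset.Iic i, b j = ∑ j ∈ U, b j := by
        apply Finset.sum_subset hsub1
        intro x hxU hxI
        have hix : i < x := lt_of_not_ge (fun h => hxI (Finset.mem_Iic.mpr h))
        have hxT : x ∈ T := by
          rcases Finset.mem_union.mp hxU with h | h
          · exact h
          · exact absurd (Finset.mem_Iio.mp h) (not_lt_of_gt hix)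
        exact hz x hxT hix
      have hmono' : (f (Finset.Iic i) : ℤ) ≤ (f U : ℤ) := by
        exact_mod_cast hmono _ _ (by intro x hx; exact hsub1 hx)
      have h1 := hcon (Finset.Iic i)
      unfold Tight at hUt ⊢
      linarith
  -- conclude b = a^max
  apply hne
  funext k
  have h1 : Tight f b (Finset.Iic k) := key k.val k rfl
  have h2 : Tight f b (Finset.Iio k) :=
    tight_Iio f b hf0 (fun j _ => key j.val j rfl)
  have hins : Finset.Iic k = insert k (Finset.Iio k) := by
    ext x; simp [Finset.mem_Iic, Finset.mem_Iio, le_iff_lt_or_eq, or_comm]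
  unfold Tight at h1 h2
  have hsplit : ∑ j ∈ Finset.Iic k, b j = b k + ∑ j ∈ Finset.Iio k, b j := by
    rw [hins, Finset.sum_insert (by simp)]
  linarith
end

section
/- Define a^max ∈ ℤ^n by a^max_k = f([k]) − f([k−1]) for each k ∈ [n] (where [0] = ∅). Then for every i ∈ [n] and every integer t with 0 ≤ t ≤ f({i}) − a^max_i, there exists a basis b ∈ PB such that b_k = a^max_k for all k > i and b_i = a^max_i + t. -/
open Finset

variable {n : ℕ}

open Finset

namespace PolyAux

variable {n : ℕ}

/-- truncation of `f` forcing coordinate `i` down to marginal `s`. -/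
def gg (f : Finset (Fin n) → ℕ) (i : Fin n) (s : ℤ) (I : Finset (Fin n)) : ℤ :=
  min (f I : ℤ) ((f (I.erase i) : ℤ) + s)

lemma gg_le_f (f : Finset (Fin n) → ℕ) (i : Fin n) (s : ℤ) (I : Finset (Fin n)) :
    gg f i s I ≤ (f I : ℤ) := min_le_left _ _

lemma gg_nonneg (f : Finset (Fin n) → ℕ) (i : Fin n) {s : ℤ} (hs : 0 ≤ s)
    (I : Finset (Fin n)) : 0 ≤ gg f i s I :=
  le_min (by positivity) (by positivity)

lemma gg_mono (f : Finset (Fin n) → ℕ) (i : Fin n) (s : ℤ)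
    (hmono : ∀ I J : Finset (Fin n), I ⊆ J → f I ≤ f J)
    {I J : Finset (Fin n)} (h : I ⊆ J) : gg f i s I ≤ gg f i s J := by
  refine min_le_min ?_ ?_
  · exact_mod_cast hmono _ _ h
  · have h2 := hmono _ _ (Finset.erase_subset_erase i h)
    have h3 : (f (I.erase i) : ℤ) ≤ (f (J.erase i) : ℤ) := by exact_mod_cast h2
    linarith

lemma gg_mixed (f : Finset (Fin n) → ℕ) (i : Fin n) (s : ℤ)
    (hmono : ∀ I J : Finset (Fin n), I ⊆ J → f I ≤ f J)
    (hsub : ∀ I J : Finset (Fin n), f (I ∪ J) + f (I ∩ J) ≤ f I + f J)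
    (I J : Finset (Fin n)) :
    gg f i s (I ∪ J) + gg f i s (I ∩ J) ≤ (f I : ℤ) + ((f (J.erase i) : ℤ) + s) := by
  have h2 : I ∩ J.erase i = (I ∩ J).erase i := by
    ext x; simp only [mem_inter, mem_erase]; tauto
  have hkey : (f (I ∪ J.erase i) : ℤ) + (f ((I ∩ J).erase i) : ℤ)
      ≤ (f I : ℤ) + (f (J.erase i) : ℤ) := by
    have := hsub I (J.erase i)
    rw [h2] at this
    exact_mod_cast this
  by_cases hi : i ∈ I
  · have h1 : I ∪ J.erase i = I ∪ J := by
      ext x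
      by_cases hx : x = i
      · subst hx; simp [hi]
      · simp only [mem_union, mem_erase, hx]; tauto
    have g1 : gg f i s (I ∪ J) ≤ (f (I ∪ J.erase i) : ℤ) := by
      rw [h1]; exact gg_le_f _ _ _ _
    have g2 : gg f i s (I ∩ J) ≤ (f ((I ∩ J).erase i) : ℤ) + s := min_le_right _ _
    linarith
  · have h1 : (I ∪ J).erase i = I ∪ J.erase i := by
      ext x
      by_cases hx : x = i
      · subst hx; simp [hi]
      · simp only [mem_union, mem_erase, hx]; tauto
    have h3 : I ∩ J = (I ∩ J).erase i := by
      ext x; simp only [mem_inter, mem_erase]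
      constructor
      · intro hx; exact ⟨fun he => hi (he ▸ hx.1), hx⟩
      · tauto
    have g1 : gg f i s (I ∪ J) ≤ (f (I ∪ J.erase i) : ℤ) + s :=
      calc gg f i s (I ∪ J) ≤ (f ((I ∪ J).erase i) : ℤ) + s := min_le_right _ _
        _ = (f (I ∪ J.erase i) : ℤ) + s := by rw [h1]
    have g2 : gg f i s (I ∩ J) ≤ (f ((I ∩ J).erase i) : ℤ) :=
      calc gg f i s (I ∩ J) ≤ (f (I ∩ J) : ℤ) := gg_le_f _ _ _ _
        _ = (f ((I ∩ J).erase i) : ℤ) := by rw [← h3]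
    linarith

lemma gg_submod (f : Finset (Fin n) → ℕ) (i : Fin n) (s : ℤ)
    (hmono : ∀ I J : Finset (Fin n), I ⊆ J → f I ≤ f J)
    (hsub : ∀ I J : Finset (Fin n), f (I ∪ J) + f (I ∩ J) ≤ f I + f J)
    (I J : Finset (Fin n)) :
    gg f i s (I ∪ J) + gg f i s (I ∩ J) ≤ gg f i s I + gg f i s J := by
  rcases min_cases (f I : ℤ) ((f (I.erase i) : ℤ) + s) with ⟨hI, _⟩ | ⟨hI, _⟩ <;>
    rcases min_cases (f J : ℤ) ((f (J.erase i) : ℤ) + s) with ⟨hJ, _⟩ | ⟨hJ, _⟩ <;>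
    rw [show gg f i s I = min (f I : ℤ) ((f (I.erase i) : ℤ) + s) from rfl,
      show gg f i s J = min (f J : ℤ) ((f (J.erase i) : ℤ) + s) from rfl, hI, hJ]
  · have g1 : gg f i s (I ∪ J) ≤ (f (I ∪ J) : ℤ) := gg_le_f _ _ _ _
    have g2 : gg f i s (I ∩ J) ≤ (f (I ∩ J) : ℤ) := gg_le_f _ _ _ _
    have hc : (f (I ∪ J) : ℤ) + (f (I ∩ J) : ℤ) ≤ (f I : ℤ) + (f J : ℤ) := by
      exact_mod_cast hsub I J
    linarith
  · exact gg_mixed f i s hmono hsub I J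
  · have := gg_mixed f i s hmono hsub J I
    rw [union_comm J I, inter_comm J I] at this
    linarith
  · have g1 : gg f i s (I ∪ J) ≤ (f ((I ∪ J).erase i) : ℤ) + s := min_le_right _ _
    have g2 : gg f i s (I ∩ J) ≤ (f ((I ∩ J).erase i) : ℤ) + s := min_le_right _ _
    have h1 : (I ∪ J).erase i = I.erase i ∪ J.erase i := Finset.erase_union_distrib I J i
    have h2 : (I ∩ J).erase i = I.erase i ∩ J.erase i := by
      ext x; simp only [mem_inter, mem_erase]; tauto
    have hc : (f (I.erase i ∪ J.erase i) : ℤ) + (f (I.erase i ∩ J.erase i) : ℤ)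
        ≤ (f (I.erase i) : ℤ) + (f (J.erase i) : ℤ) := by
      exact_mod_cast hsub (I.erase i) (J.erase i)
    rw [h1] at g1; rw [h2] at g2
    linarith

end PolyAux

/-- For each `i` and each `0 ≤ t ≤ f({i}) - a^max_i`, there is a basis agreeing with
`a^max` above `i` and with `i`-th entry `a^max_i + t`. -/

theorem exists_basis_agreeing_above
    (n : ℕ) (hn : 0 < n) (f : Finset (Fin n) → ℕ)
    (hf0 : f ∅ = 0)
    (hmono : ∀ I J : Finset (Fin n), I ⊆ J → f I ≤ f J)
    (hsub : ∀ I J : Finset (Fin n), f (I ∪ J) + f (I ∩ J) ≤ f I + f J)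
    (i : Fin n) (t : ℤ) (ht0 : 0 ≤ t)
    (ht : t ≤ (f {i} : ℤ) - ((f (Finset.Iic i) : ℤ) - (f (Finset.Iio i) : ℤ))) :
    ∃ b ∈ PB n f,
      (∀ k : Fin n, i < k → b k = (f (Finset.Iic k) : ℤ) - (f (Finset.Iio k) : ℤ)) ∧
      b i = ((f (Finset.Iic i) : ℤ) - (f (Finset.Iio i) : ℤ)) + t := by
  classical
  set s : ℤ := ((f (Finset.Iic i) : ℤ) - (f (Finset.Iio i) : ℤ)) + t with hs_def
  have hIioIic : (f (Finset.Iio i) : ℤ) ≤ (f (Finset.Iic i) : ℤ) := by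
    exact_mod_cast hmono _ _ Finset.Iio_subset_Iic_self
  have hs0 : 0 ≤ s := by rw [hs_def]; linarith
  have hsf : s ≤ (f {i} : ℤ) := by rw [hs_def]; linarith
  -- key inequality: if `Iic i ⊆ K` then `f K ≤ f (K.erase i) + s`
  have hKey : ∀ K : Finset (Fin n), Finset.Iic i ⊆ K →
      (f K : ℤ) ≤ (f (K.erase i) : ℤ) + s := by
    intro K hK
    have hu : K.erase i ∪ Finset.Iic i = K := by
      ext x
      simp only [mem_union, mem_erase, mem_Iic]
      constructor
      · rintro (⟨_, hx⟩ | hx)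
        · exact hx
        · exact hK (mem_Iic.2 hx)
      · intro hx
        by_cases hxi : x = i
        · exact Or.inr (le_of_eq hxi)
        · exact Or.inl ⟨hxi, hx⟩
    have hi2 : K.erase i ∩ Finset.Iic i = Finset.Iio i := by
      ext x
      simp only [mem_inter, mem_erase, mem_Iic, mem_Iio]
      constructor
      · rintro ⟨⟨hxi, _⟩, hxle⟩
        exact lt_of_le_of_ne hxle hxi
      · intro hx
        exact ⟨⟨ne_of_lt hx, hK (mem_Iic.2 hx.le)⟩, hx.le⟩
    have h := hsub (K.erase i) (Finset.Iic i)
    rw [hu, hi2] at h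
    have hc : (f K : ℤ) + (f (Finset.Iio i) : ℤ)
        ≤ (f (K.erase i) : ℤ) + (f (Finset.Iic i) : ℤ) := by exact_mod_cast h
    rw [hs_def]; linarith
  set g : Finset (Fin n) → ℤ := PolyAux.gg f i s with hg_def
  have hgle : ∀ K, g K ≤ (f K : ℤ) := fun K => PolyAux.gg_le_f f i s K
  have hg0 : ∀ K, 0 ≤ g K := fun K => PolyAux.gg_nonneg f i hs0 K
  have hgmono : ∀ {I J : Finset (Fin n)}, I ⊆ J → g I ≤ g J :=
    fun h => PolyAux.gg_mono f i s hmono h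
  have hgsub : ∀ I J : Finset (Fin n), g (I ∪ J) + g (I ∩ J) ≤ g I + g J :=
    PolyAux.gg_submod f i s hmono hsub
  have hg_eq : ∀ K : Finset (Fin n), Finset.Iic i ⊆ K → g K = (f K : ℤ) :=
    fun K hK => min_eq_left (hKey K hK)
  have hgi : g {i} = s := by
    have hrfl : g {i} = min ((f {i} : ℤ)) ((f (Finset.erase {i} i) : ℤ) + s) := rfl
    rw [hrfl, Finset.erase_singleton, hf0]
    simp only [Nat.cast_zero, zero_add]
    exact min_eq_right hsf
  -- the greedy vector along the order (i, 1, 2, ..., n)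
  set b : Fin n → ℤ := fun j =>
    if j = i then g {i}
    else g (insert i (Finset.Iic j)) - g (insert i (Finset.Iio j)) with hb_def
  have hbi : b i = g {i} := by simp [hb_def]
  have hbj : ∀ j : Fin n, j ≠ i →
      b j = g (insert i (Finset.Iic j)) - g (insert i (Finset.Iio j)) := by
    intro j hj; simp [hb_def, hj]
  have hb_nonneg : ∀ j, 0 ≤ b j := by
    intro j
    by_cases hj : j = i
    · rw [hj, hbi, hgi]; exact hs0
    · rw [hbj j hj]
      have hm2 : g (insert i (Finset.Iio j)) ≤ g (insert i (Finset.Iic j)) :=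
        hgmono (Finset.insert_subset_insert i (Finset.Iio_subset_Iic_self (a := j)))
      linarith
  have hb_le : ∀ j, b j ≤ (f {j} : ℤ) := by
    intro j
    by_cases hj : j = i
    · rw [hj, hbi, hgi]; exact hsf
    · rw [hbj j hj]
      have hA : insert i (Finset.Iio j) ∪ {j} = insert i (Finset.Iic j) := by
        ext x
        simp only [mem_union, mem_insert, mem_Iio, mem_singleton, mem_Iic]
        constructor
        · rintro ((rfl | h) | rfl)
          · exact Or.inl rfl
          · exact Or.inr h.le
          · exact Or.inr le_rfl
        · rintro (rfl | h)
          · exact Or.inl (Or.inl rfl)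
          · rcases eq_or_lt_of_le h with rfl | h'
            · exact Or.inr rfl
            · exact Or.inl (Or.inr h')
      have hB : insert i (Finset.Iio j) ∩ {j} = (∅ : Finset (Fin n)) := by
        ext x
        simp only [mem_inter, mem_insert, mem_Iio, mem_singleton, notMem_empty, iff_false]
        rintro ⟨h1 | h1, rfl⟩
        · exact hj h1
        · exact lt_irrefl _ h1
      have hineq := hgsub (insert i (Finset.Iio j)) {j}
      rw [hA, hB] at hineq
      have h0 := hg0 (∅ : Finset (Fin n))
      have hsing := hgle {j}
      linarith
  -- partial-sum inequality, by strong induction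
  have hsum_le : ∀ I : Finset (Fin n), ∑ j ∈ I, b j ≤ g I := by
    intro I
    induction I using Finset.strongInduction with
    | _ I ih =>
      by_cases hne : (I.erase i).Nonempty
      · set m := (I.erase i).max' hne with hm_def
        have hmI' : m ∈ I.erase i := Finset.max'_mem _ hne
        have hmI : m ∈ I := Finset.mem_of_mem_erase hmI'
        have hmi : m ≠ i := Finset.ne_of_mem_erase hmI'
        have hAu : insert i (Finset.Iio m) ∪ I = insert i (Finset.Iic m) := by
          ext x
          simp only [mem_union, mem_insert, mem_Iio, mem_Iic]
          constructor
          · rintro ((rfl | h) | h)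
            · exact Or.inl rfl
            · exact Or.inr h.le
            · by_cases hxi : x = i
              · exact Or.inl hxi
              · exact Or.inr (Finset.le_max' _ x (Finset.mem_erase.2 ⟨hxi, h⟩))
          · rintro (rfl | h)
            · exact Or.inl (Or.inl rfl)
            · rcases eq_or_lt_of_le h with rfl | h'
              · exact Or.inr hmI
              · exact Or.inl (Or.inr h')
        have hAi : insert i (Finset.Iio m) ∩ I = I.erase m := by
          ext x
          simp only [mem_inter, mem_insert, mem_Iio, mem_erase]
          constructor
          · rintro ⟨rfl | h, hxI⟩
            · exact ⟨fun he => hmi he.symm, hxI⟩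
            · exact ⟨ne_of_lt h, hxI⟩
          · rintro ⟨hxm, hxI⟩
            refine ⟨?_, hxI⟩
            by_cases hxi : x = i
            · exact Or.inl hxi
            · exact Or.inr
                (lt_of_le_of_ne (Finset.le_max' _ x (Finset.mem_erase.2 ⟨hxi, hxI⟩)) hxm)
        have hsubm := hgsub (insert i (Finset.Iio m)) I
        rw [hAu, hAi] at hsubm
        have hihm := ih (I.erase m) (Finset.erase_ssubset hmI)
        have hself : ∑ j ∈ I, b j = b m + ∑ j ∈ I.erase m, b j :=
          (Finset.add_sum_erase I b hmI).symm
        have hbm : b m = g (insert i (Finset.Iic m)) - g (insert i (Finset.Iio m)) :=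
          hbj m hmi
        rw [hself, hbm]
        linarith
      · rw [Finset.not_nonempty_iff_eq_empty] at hne
        have hIsub : I ⊆ {i} := by
          intro x hx
          rw [Finset.mem_singleton]
          by_contra hxi
          have : x ∈ I.erase i := Finset.mem_erase.2 ⟨hxi, hx⟩
          rw [hne] at this
          exact absurd this (Finset.notMem_empty x)
        rcases Finset.subset_singleton_iff.1 hIsub with rfl | rfl
        · simpa using hg0 (∅ : Finset (Fin n))
        · rw [Finset.sum_singleton, hbi]
  -- total sum equals f(univ), by telescoping
  set F : ℕ → ℤ :=
    fun k => g (insert i (Finset.univ.filter fun x : Fin n => (x : ℕ) < k)) with hF_def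
  have hfilt_lt : ∀ j : Fin n,
      (Finset.univ.filter fun x : Fin n => (x : ℕ) < (j : ℕ)) = Finset.Iio j := by
    intro j; ext x
    simp only [Finset.mem_filter, Finset.mem_univ, true_and, Finset.mem_Iio]
    exact Fin.lt_def.symm
  have hfilt_le : ∀ j : Fin n,
      (Finset.univ.filter fun x : Fin n => (x : ℕ) < (j : ℕ) + 1) = Finset.Iic j := by
    intro j; ext x
    simp only [Finset.mem_filter, Finset.mem_univ, true_and, Finset.mem_Iic]
    rw [Nat.lt_succ_iff]
    exact Fin.le_def.symm
  have hFsucc : ∀ j : Fin n, F ((j : ℕ) + 1) = g (insert i (Finset.Iic j)) := by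
    intro j; rw [hF_def]; simp only; rw [hfilt_le]
  have hFval : ∀ j : Fin n, F (j : ℕ) = g (insert i (Finset.Iio j)) := by
    intro j; rw [hF_def]; simp only; rw [hfilt_lt]
  have hFn : F n = g Finset.univ := by
    rw [hF_def]; simp only
    have hu : (Finset.univ.filter fun x : Fin n => (x : ℕ) < n) = Finset.univ := by
      ext x; simp [x.isLt]
    rw [hu, Finset.insert_eq_self.2 (Finset.mem_univ i)]
  have hF0 : F 0 = g {i} := by
    rw [hF_def]; simp only
    have he : (Finset.univ.filter fun x : Fin n => (x : ℕ) < 0) = (∅ : Finset (Fin n)) := by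
      ext x; simp
    rw [he]
    congr 1
  have hFi : F ((i : ℕ) + 1) = F (i : ℕ) := by
    rw [hFsucc i, hFval i]
    congr 1
    rw [Finset.Iio_insert, Finset.insert_eq_self]
    exact Finset.mem_Iic.2 le_rfl
  have hsum_eq : ∑ j, b j = (f Finset.univ : ℤ) := by
    have h1 : ∑ j : Fin n, b j = b i + ∑ j ∈ Finset.univ.erase i, b j :=
      (Finset.add_sum_erase Finset.univ b (Finset.mem_univ i)).symm
    have h2 : ∑ j ∈ Finset.univ.erase i, b j
        = ∑ j ∈ Finset.univ.erase i, (F ((j : ℕ) + 1) - F (j : ℕ)) := by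
      refine Finset.sum_congr rfl ?_
      intro j hj
      rw [hbj j (Finset.ne_of_mem_erase hj), hFsucc, hFval]
    have h3 : (F ((i : ℕ) + 1) - F (i : ℕ))
          + ∑ j ∈ Finset.univ.erase i, (F ((j : ℕ) + 1) - F (j : ℕ))
        = ∑ j : Fin n, (F ((j : ℕ) + 1) - F (j : ℕ)) :=
      Finset.add_sum_erase Finset.univ
        (fun j : Fin n => F ((j : ℕ) + 1) - F (j : ℕ)) (Finset.mem_univ i)
    have h4 : ∑ j : Fin n, (F ((j : ℕ) + 1) - F (j : ℕ)) = F n - F 0 := by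
      rw [Fin.sum_univ_eq_sum_range (fun k => F (k + 1) - F k) n]
      exact Finset.sum_range_sub F n
    have hgu : g Finset.univ = (f Finset.univ : ℤ) := hg_eq _ (Finset.subset_univ _)
    rw [h1, h2, hbi]
    linarith [h3, h4, hFi, hF0, hFn, hgu]
  have hb_PB : b ∈ PB n f := by
    rw [PB, Finset.mem_filter]
    refine ⟨?_, ?_, hsum_eq⟩
    · rw [Fintype.mem_piFinset]
      intro j
      rw [Finset.mem_Icc]
      exact ⟨hb_nonneg j, hb_le j⟩
    · intro I
      exact le_trans (hsum_le I) (hgle I)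
  refine ⟨b, hb_PB, ?_, ?_⟩
  · intro k hik
    have hki : k ≠ i := ne_of_gt hik
    rw [hbj k hki]
    have h1 : insert i (Finset.Iic k) = Finset.Iic k :=
      Finset.insert_eq_self.2 (Finset.mem_Iic.2 hik.le)
    have h2 : insert i (Finset.Iio k) = Finset.Iio k :=
      Finset.insert_eq_self.2 (Finset.mem_Iio.2 hik)
    have hsub1 : Finset.Iic i ⊆ Finset.Iic k := Finset.Iic_subset_Iic.2 hik.le
    have hsub2 : Finset.Iic i ⊆ Finset.Iio k := fun x hx =>
      Finset.mem_Iio.2 (lt_of_le_of_lt (Finset.mem_Iic.1 hx) hik)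
    rw [h1, h2, hg_eq _ hsub1, hg_eq _ hsub2]
  · rw [hbi, hgi]
end

section
/- For each i ∈ [n], the number of bases a ∈ PB whose set of internally active indices is exactly [n] ∖ {i} equals f({i}) − (f([i]) − f([i−1])) (where [0] = ∅). -/
open Finset

variable {n : ℕ}

lemma mem_PB_iff {f : Finset (Fin n) → ℕ} {a : Fin n → ℤ} :
    a ∈ PB n f ↔ (∀ j, 0 ≤ a j) ∧ (∀ I : Finset (Fin n), ∑ j ∈ I, a j ≤ (f I : ℤ)) ∧
      ∑ j, a j = (f Finset.univ : ℤ) := by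
  simp only [PB, Finset.mem_filter, Fintype.mem_piFinset, Finset.mem_Icc]
  constructor
  · rintro ⟨h1, h2, h3⟩
    exact ⟨fun j => (h1 j).1, h2, h3⟩
  · rintro ⟨h1, h2, h3⟩
    refine ⟨fun j => ⟨h1 j, ?_⟩, h2, h3⟩
    have := h2 {j}
    simpa using this

lemma tight_union {f : Finset (Fin n) → ℕ}
    (hsub : ∀ I J : Finset (Fin n), f (I ∪ J) + f (I ∩ J) ≤ f I + f J)
    {a : Fin n → ℤ} (ha : a ∈ PB n f) {A B : Finset (Fin n)}
    (hA : ∑ j ∈ A, a j = (f A : ℤ)) (hB : ∑ j ∈ B, a j = (f B : ℤ)) :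
    ∑ j ∈ A ∪ B, a j = (f (A ∪ B) : ℤ) ∧ ∑ j ∈ A ∩ B, a j = (f (A ∩ B) : ℤ) := by
  obtain ⟨-, h2, -⟩ := mem_PB_iff.1 ha
  have hsum := Finset.sum_union_inter (s₁ := A) (s₂ := B) (f := a)
  have h3 := h2 (A ∪ B)
  have h4 := h2 (A ∩ B)
  have h5 := hsub A B
  have h5' : ((f (A ∪ B) : ℤ)) + (f (A ∩ B) : ℤ) ≤ (f A : ℤ) + (f B : ℤ) := by
    exact_mod_cast h5
  constructor <;> linarith

lemma pbSum_single_ite (k : Fin n) (S : Finset (Fin n)) :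
    ∑ j ∈ S, Pi.single k (1:ℤ) j = if k ∈ S then 1 else 0 := by
  simp [Pi.single_apply, Finset.sum_ite_eq']

lemma exchange {f : Finset (Fin n) → ℕ}
    (hsub : ∀ I J : Finset (Fin n), f (I ∪ J) + f (I ∩ J) ≤ f I + f J)
    {a b : Fin n → ℤ} (ha : a ∈ PB n f) (hb : b ∈ PB n f)
    {k : Fin n} (hk : a k < b k) :
    ∃ l, b l < a l ∧ a + Pi.single k 1 - Pi.single l 1 ∈ PB n f := by
  obtain ⟨ha1, ha2, ha3⟩ := mem_PB_iff.1 ha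
  obtain ⟨hb1, hb2, hb3⟩ := mem_PB_iff.1 hb
  -- family of tight sets containing k
  set 𝒮 : Finset (Finset (Fin n)) :=
    Finset.univ.powerset.filter (fun S => k ∈ S ∧ ∑ j ∈ S, a j = (f S : ℤ)) with h𝒮
  have hmem : ∀ {S : Finset (Fin n)}, S ∈ 𝒮 ↔ k ∈ S ∧ ∑ j ∈ S, a j = (f S : ℤ) := by
    intro S; simp [h𝒮]
  have huniv : Finset.univ ∈ 𝒮 := hmem.2 ⟨Finset.mem_univ k, ha3⟩
  obtain ⟨T, hT𝒮, hTmin⟩ := 𝒮.exists_min_image Finset.card ⟨_, huniv⟩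
  obtain ⟨hkT, hTt⟩ := hmem.1 hT𝒮
  have hTsub : ∀ S ∈ 𝒮, T ⊆ S := by
    intro S hS
    obtain ⟨hkS, hSt⟩ := hmem.1 hS
    have hint : T ∩ S ∈ 𝒮 :=
      hmem.2 ⟨Finset.mem_inter.2 ⟨hkT, hkS⟩, (tight_union hsub ha hTt hSt).2⟩
    have h1 : T ∩ S ⊆ T := Finset.inter_subset_left
    have h2 := hTmin _ hint
    have : T ∩ S = T := Finset.eq_of_subset_of_card_le h1 h2
    rw [← this]; exact Finset.inter_subset_right
  -- find l ∈ T with b l < a l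
  have hsumb : ∑ j ∈ T, b j ≤ ∑ j ∈ T, a j := hTt ▸ hb2 T
  have hex : ∃ l ∈ T.erase k, b l < a l := by
    by_contra hcon
    push_neg at hcon
    have h1 : ∑ j ∈ T.erase k, a j ≤ ∑ j ∈ T.erase k, b j :=
      Finset.sum_le_sum hcon
    have e1 : ∑ j ∈ T.erase k, a j + a k = ∑ j ∈ T, a j := Finset.sum_erase_add _ _ hkT
    have e2 : ∑ j ∈ T.erase k, b j + b k = ∑ j ∈ T, b j := Finset.sum_erase_add _ _ hkT
    linarith
  obtain ⟨l, hlT', hl⟩ := hex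
  have hlk : l ≠ k := Finset.ne_of_mem_erase hlT'
  have hlT : l ∈ T := Finset.mem_of_mem_erase hlT'
  refine ⟨l, hl, ?_⟩
  have heval : ∀ x, ((a + Pi.single k 1 - Pi.single l 1 : Fin n → ℤ)) x
      = a x + (if x = k then 1 else 0) - (if x = l then 1 else 0) := by
    intro x; simp [Pi.single_apply]
  refine mem_PB_iff.2 ⟨?_, ?_, ?_⟩
  · intro j
    rw [heval]
    rcases eq_or_ne j l with rfl | hjl
    · rw [if_neg hlk, if_pos rfl]
      have := hb1 j; linarith
    · rw [if_neg hjl]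
      have := ha1 j
      split <;> linarith
  · intro S
    have hsplit : ∑ j ∈ S, ((a + Pi.single k 1 - Pi.single l 1 : Fin n → ℤ)) j
        = ∑ j ∈ S, a j + (if k ∈ S then 1 else 0) - (if l ∈ S then 1 else 0) := by
      simp only [Pi.sub_apply, Pi.add_apply, Finset.sum_sub_distrib, Finset.sum_add_distrib,
        pbSum_single_ite]
    rw [hsplit]
    by_cases hkS : k ∈ S
    · by_cases hlS : l ∈ S
      · simpa [hkS, hlS] using ha2 S
      · -- S is not tight
        have hnt : ∑ j ∈ S, a j ≠ (f S : ℤ) := by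
          intro ht
          exact hlS (hTsub S (hmem.2 ⟨hkS, ht⟩) hlT)
        have := ha2 S
        have : ∑ j ∈ S, a j < (f S : ℤ) := lt_of_le_of_ne this hnt
        simp only [if_pos hkS, if_neg hlS]
        linarith
    · have := ha2 S
      simp only [if_neg hkS]
      split <;> linarith
  · have hsplit : ∑ j, ((a + Pi.single k 1 - Pi.single l 1 : Fin n → ℤ)) j
        = ∑ j, a j + (if k ∈ Finset.univ then 1 else 0) - (if l ∈ Finset.univ then (1:ℤ) else 0) := by
      simp only [Pi.sub_apply, Pi.add_apply, Finset.sum_sub_distrib, Finset.sum_add_distrib,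
        pbSum_single_ite]
    rw [hsplit]
    simp [ha3]

lemma eq_of_active {f : Finset (Fin n) → ℕ}
    (hsub : ∀ I J : Finset (Fin n), f (I ∪ J) + f (I ∩ J) ≤ f I + f J)
    {i : Fin n} {a b : Fin n → ℤ} (ha : a ∈ PB n f) (hb : b ∈ PB n f)
    (hAa : ∀ j, j ≠ i → IntAct f a j) (hAb : ∀ j, j ≠ i → IntAct f b j)
    (hle : a i ≤ b i) (hib : IntAct f b i ∨ a i = b i) : a = b := by
  by_contra hne
  have hDne : (Finset.univ.filter (fun j => a j ≠ b j)).Nonempty := by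
    rw [Finset.filter_nonempty_iff]
    by_contra hc
    push_neg at hc
    exact hne (funext fun j => hc j (Finset.mem_univ j))
  set D := Finset.univ.filter (fun j => a j ≠ b j) with hD
  set k := D.min' hDne with hk
  have hkD : k ∈ D := D.min'_mem hDne
  have hkab : a k ≠ b k := (Finset.mem_filter.1 hkD).2
  rcases lt_or_gt_of_ne hkab with hlt | hgt
  · obtain ⟨l, hbl, hcPB⟩ := exchange hsub ha hb hlt
    have hlD : l ∈ D := Finset.mem_filter.2 ⟨Finset.mem_univ l, ne_of_gt hbl⟩
    have hkl : k < l := lt_of_le_of_ne (D.min'_le l hlD)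
      (by rintro rfl; exact absurd hlt (not_lt_of_gt hbl))
    have hli : l ≠ i := by
      rintro rfl; exact absurd hle (not_le_of_gt hbl)
    have := hAa l hli k hkl
    rw [sub_add_eq_add_sub] at this
    exact this hcPB
  · obtain ⟨l, hbl, hcPB⟩ := exchange hsub hb ha hgt
    have hlD : l ∈ D := Finset.mem_filter.2 ⟨Finset.mem_univ l, (ne_of_gt hbl).symm⟩
    have hkl : k < l := lt_of_le_of_ne (D.min'_le l hlD)
      (by rintro rfl; exact absurd hgt (not_lt_of_gt hbl))
    rcases eq_or_ne l i with rfl | hli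
    · rcases hib with hib | hib
      · have := hib k hkl
        rw [sub_add_eq_add_sub] at this
        exact this hcPB
      · exact absurd hib (ne_of_gt hbl).symm
    · have := hAb l hli k hkl
      rw [sub_add_eq_add_sub] at this
      exact this hcPB

/-- Contracted rank function: `h(I) = min(f(I), f(I ∪ {i}) - s)`. -/
def hfun (f : Finset (Fin n) → ℕ) (i : Fin n) (s : ℤ) (I : Finset (Fin n)) : ℤ :=
  min (f I : ℤ) ((f (I ∪ {i}) : ℤ) - s)

lemma hfun_empty {f : Finset (Fin n) → ℕ} {i : Fin n} {s : ℤ}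
    (hf0 : f ∅ = 0) (hs : s ≤ (f {i} : ℤ)) : hfun f i s ∅ = 0 := by
  have : (∅ : Finset (Fin n)) ∪ {i} = {i} := by simp
  rw [hfun, this, hf0]
  simp only [Nat.cast_zero]
  exact min_eq_left (by linarith)

lemma hfun_mono {f : Finset (Fin n) → ℕ}
    (hmono : ∀ I J : Finset (Fin n), I ⊆ J → f I ≤ f J)
    {i : Fin n} {s : ℤ} {I J : Finset (Fin n)} (hIJ : I ⊆ J) :
    hfun f i s I ≤ hfun f i s J := by
  refine le_min ?_ ?_
  · exact (min_le_left _ _).trans (by exact_mod_cast hmono I J hIJ)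
  · refine (min_le_right _ _).trans ?_
    have : f (I ∪ {i}) ≤ f (J ∪ {i}) := hmono _ _ (Finset.union_subset_union_left hIJ)
    have : (f (I ∪ {i}) : ℤ) ≤ (f (J ∪ {i}) : ℤ) := by exact_mod_cast this
    linarith

lemma hfun_submod {f : Finset (Fin n) → ℕ}
    (hsub : ∀ I J : Finset (Fin n), f (I ∪ J) + f (I ∩ J) ≤ f I + f J)
    {i : Fin n} {s : ℤ} {I J : Finset (Fin n)} (hiI : i ∉ I) (hiJ : i ∉ J) :
    hfun f i s (I ∪ J) + hfun f i s (I ∩ J) ≤ hfun f i s I + hfun f i s J := by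
  have cast_sub : ∀ A B : Finset (Fin n),
      ((f (A ∪ B) : ℤ)) + (f (A ∩ B) : ℤ) ≤ (f A : ℤ) + (f B : ℤ) := by
    intro A B; exact_mod_cast hsub A B
  rcases le_total (f I : ℤ) ((f (I ∪ {i}) : ℤ) - s) with hI | hI <;>
    rcases le_total (f J : ℤ) ((f (J ∪ {i}) : ℤ) - s) with hJ | hJ
  · -- both minima are f
    rw [show hfun f i s I = (f I : ℤ) from min_eq_left hI, show hfun f i s J = (f J : ℤ) from min_eq_left hJ]
    have h1 : hfun f i s (I ∪ J) ≤ (f (I ∪ J) : ℤ) := min_le_left _ _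
    have h2 : hfun f i s (I ∩ J) ≤ (f (I ∩ J) : ℤ) := min_le_left _ _
    have := cast_sub I J
    linarith
  · -- f I, f(J∪i)-s
    rw [show hfun f i s I = (f I : ℤ) from min_eq_left hI, show hfun f i s J = (f (J ∪ {i}) : ℤ) - s from min_eq_right hJ]
    have h1 : hfun f i s (I ∪ J) ≤ (f ((I ∪ J) ∪ {i}) : ℤ) - s := min_le_right _ _
    have h2 : hfun f i s (I ∩ J) ≤ (f (I ∩ J) : ℤ) := min_le_left _ _
    have e1 : I ∪ (J ∪ {i}) = (I ∪ J) ∪ {i} := by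
      ext x; simp only [Finset.mem_union, Finset.mem_inter, Finset.mem_singleton]; tauto
    have e2 : I ∩ (J ∪ {i}) = I ∩ J := by
      ext x; simp only [Finset.mem_inter, Finset.mem_union, Finset.mem_singleton]
      constructor
      · rintro ⟨hx, hx2 | rfl⟩
        · exact ⟨hx, hx2⟩
        · exact absurd hx hiI
      · tauto
    have := cast_sub I (J ∪ {i})
    rw [e1, e2] at this
    linarith
  · -- f(I∪i)-s, f J
    rw [show hfun f i s I = (f (I ∪ {i}) : ℤ) - s from min_eq_right hI, show hfun f i s J = (f J : ℤ) from min_eq_left hJ]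
    have h1 : hfun f i s (I ∪ J) ≤ (f ((I ∪ J) ∪ {i}) : ℤ) - s := min_le_right _ _
    have h2 : hfun f i s (I ∩ J) ≤ (f (I ∩ J) : ℤ) := min_le_left _ _
    have e1 : (I ∪ {i}) ∪ J = (I ∪ J) ∪ {i} := by
      ext x; simp only [Finset.mem_union, Finset.mem_inter, Finset.mem_singleton]; tauto
    have e2 : (I ∪ {i}) ∩ J = I ∩ J := by
      ext x; simp only [Finset.mem_inter, Finset.mem_union, Finset.mem_singleton]
      constructor
      · rintro ⟨hx2 | rfl, hx⟩
        · exact ⟨hx2, hx⟩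
        · exact absurd hx hiJ
      · tauto
    have := cast_sub (I ∪ {i}) J
    rw [e1, e2] at this
    linarith
  · -- both f(·∪i)-s
    rw [show hfun f i s I = (f (I ∪ {i}) : ℤ) - s from min_eq_right hI, show hfun f i s J = (f (J ∪ {i}) : ℤ) - s from min_eq_right hJ]
    have h1 : hfun f i s (I ∪ J) ≤ (f ((I ∪ J) ∪ {i}) : ℤ) - s := min_le_right _ _
    have h2 : hfun f i s (I ∩ J) ≤ (f ((I ∩ J) ∪ {i}) : ℤ) - s := min_le_right _ _
    have e1 : (I ∪ {i}) ∪ (J ∪ {i}) = (I ∪ J) ∪ {i} := by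
      ext x; simp only [Finset.mem_union, Finset.mem_inter, Finset.mem_singleton]; tauto
    have e2 : (I ∪ {i}) ∩ (J ∪ {i}) = (I ∩ J) ∪ {i} := by
      ext x; simp only [Finset.mem_union, Finset.mem_inter, Finset.mem_singleton]; tauto
    have := cast_sub (I ∪ {i}) (J ∪ {i})
    rw [e1, e2] at this
    linarith

/-- Diminishing returns for `hfun`. -/
lemma hfun_dim {f : Finset (Fin n) → ℕ}
    (hsub : ∀ I J : Finset (Fin n), f (I ∪ J) + f (I ∩ J) ≤ f I + f J)
    {i m : Fin n} {s : ℤ} {X Y : Finset (Fin n)} (hXY : X ⊆ Y) (hmY : m ∉ Y)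
    (hiY : i ∉ Y) (hmi : m ≠ i) :
    hfun f i s (insert m Y) + hfun f i s X ≤ hfun f i s Y + hfun f i s (insert m X) := by
  have hiX : i ∉ X := fun h => hiY (hXY h)
  have h := hfun_submod (f := f) (i := i) (s := s) hsub hiY
    (J := insert m X) (by simp [hmi.symm, hiX])
  have e1 : Y ∪ insert m X = insert m Y := by
    ext x; simp only [Finset.mem_union, Finset.mem_insert]
    constructor
    · rintro (h | h | h)
      · exact Or.inr h
      · exact Or.inl h
      · exact Or.inr (hXY h)
    · rintro (h | h)
      · exact Or.inr (Or.inl h)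
      · exact Or.inl h
  have e2 : Y ∩ insert m X = X := by
    ext x; simp only [Finset.mem_inter, Finset.mem_insert]
    constructor
    · rintro ⟨hxY, rfl | hxX⟩
      · exact absurd hxY hmY
      · exact hxX
    · intro h; exact ⟨hXY h, Or.inr h⟩
  rw [e1, e2] at h
  linarith

/-- Prefix set `{j : j.val < k}`. -/
def Pre (n k : ℕ) : Finset (Fin n) := Finset.univ.filter fun j => (j : ℕ) < k

lemma Pre_zero : Pre n 0 = ∅ := by simp [Pre]

lemma Iio_eq_Pre (m : Fin n) : Finset.Iio m = Pre n m.val := by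
  ext x; simp only [Pre, Finset.mem_filter, Finset.mem_univ, true_and, Finset.mem_Iio, Fin.lt_def]

lemma Iic_eq_Pre (m : Fin n) : Finset.Iic m = Pre n (m.val + 1) := by
  ext x; simp only [Pre, Finset.mem_filter, Finset.mem_univ, true_and, Finset.mem_Iic, Fin.le_def, Nat.lt_succ_iff]

lemma Pre_univ : Pre n n = Finset.univ := by
  ext x; simp [Pre, x.isLt]

/-- The candidate basis: `a i = s`, greedy elsewhere. -/
def bvec (f : Finset (Fin n) → ℕ) (i : Fin n) (s : ℤ) : Fin n → ℤ :=
  fun j => if j = i then s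
    else hfun f i s (Finset.Iic j \ {i}) - hfun f i s (Finset.Iio j \ {i})

lemma bvec_apply_i (f : Finset (Fin n) → ℕ) (i : Fin n) (s : ℤ) : bvec f i s i = s := by
  simp [bvec]

lemma sum_bvec_pre {f : Finset (Fin n) → ℕ} {i : Fin n} {s : ℤ}
    (hf0 : f ∅ = 0) (hs : s ≤ (f {i} : ℤ)) (k : ℕ) :
    ∑ j ∈ Pre n k \ {i}, bvec f i s j = hfun f i s (Pre n k \ {i}) := by
  induction k with
  | zero => simp [Pre_zero, hfun_empty hf0 hs]
  | succ k ih =>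
    by_cases h : k < n
    · set m : Fin n := ⟨k, h⟩ with hm
      have hPre : Pre n (k + 1) = insert m (Pre n k) := by
        ext x; simp only [Pre, Finset.mem_filter, Finset.mem_univ, true_and,
          Finset.mem_insert, Fin.ext_iff, hm]
        omega
      have hmPre : m ∉ Pre n k := by simp [Pre, hm]
      by_cases hmi : m = i
      · have : Pre n (k+1) \ {i} = Pre n k \ {i} := by
          rw [hPre, hmi]
          ext x
          simp only [Finset.mem_sdiff, Finset.mem_insert, Finset.mem_singleton]
          tauto
        rw [this, ih]
      · have hstep : Pre n (k+1) \ {i} = insert m (Pre n k \ {i}) := by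
          rw [hPre]
          ext x
          simp only [Finset.mem_sdiff, Finset.mem_insert, Finset.mem_singleton]
          constructor
          · rintro ⟨rfl | hx, hxi⟩
            · exact Or.inl rfl
            · exact Or.inr ⟨hx, hxi⟩
          · rintro (rfl | ⟨hx, hxi⟩)
            · exact ⟨Or.inl rfl, hmi⟩
            · exact ⟨Or.inr hx, hxi⟩
        rw [hstep, Finset.sum_insert (by simp [hmPre])]
        rw [ih]
        have hb : bvec f i s m
            = hfun f i s (Finset.Iic m \ {i}) - hfun f i s (Finset.Iio m \ {i}) := by
          simp [bvec, hmi]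
        rw [hb, Iic_eq_Pre, Iio_eq_Pre, ← hstep]
        show hfun f i s (Pre n (k+1) \ {i}) - hfun f i s (Pre n k \ {i})
            + hfun f i s (Pre n k \ {i}) = hfun f i s (Pre n (k+1) \ {i})
        ring
    · have hPre : Pre n (k + 1) = Pre n k := by
        ext x
        simp only [Pre, Finset.mem_filter, Finset.mem_univ, true_and]
        have := x.isLt
        omega
      rw [hPre, ih]

lemma sum_bvec_le {f : Finset (Fin n) → ℕ} {i : Fin n} {s : ℤ}
    (hf0 : f ∅ = 0)
    (hmono : ∀ I J : Finset (Fin n), I ⊆ J → f I ≤ f J)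
    (hsub : ∀ I J : Finset (Fin n), f (I ∪ J) + f (I ∩ J) ≤ f I + f J)
    (hs : s ≤ (f {i} : ℤ)) :
    ∀ I : Finset (Fin n), i ∉ I → ∑ j ∈ I, bvec f i s j ≤ hfun f i s I := by
  intro I
  induction I using Finset.strongInduction with
  | _ I ih =>
    intro hiI
    rcases I.eq_empty_or_nonempty with rfl | hne
    · simp [hfun_empty hf0 hs]
    · set m := I.max' hne with hm
      have hmI : m ∈ I := I.max'_mem hne
      have hmi : m ≠ i := fun h => hiI (h ▸ hmI)
      set I' := I.erase m with hI'
      have hiI' : i ∉ I' := fun h => hiI (Finset.mem_of_mem_erase h)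
      have hss : I' ⊂ I := Finset.erase_ssubset hmI
      have ihI' := ih I' hss hiI'
      have hsum : ∑ j ∈ I', bvec f i s j + bvec f i s m = ∑ j ∈ I, bvec f i s j :=
        Finset.sum_erase_add _ _ hmI
      have hbm : bvec f i s m
          = hfun f i s (Finset.Iic m \ {i}) - hfun f i s (Finset.Iio m \ {i}) := by
        simp [bvec, hmi]
      -- diminishing returns with X = I', Y = Iio m \ {i}
      have hXY : I' ⊆ Finset.Iio m \ {i} := by
        intro x hx
        have hxI : x ∈ I := Finset.mem_of_mem_erase hx
        have hxm : x ≠ m := Finset.ne_of_mem_erase hx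
        have hxle : x ≤ m := I.le_max' x hxI
        have hxi : x ≠ i := fun h => hiI (h ▸ hxI)
        simp only [Finset.mem_sdiff, Finset.mem_Iio, Finset.mem_singleton]
        exact ⟨lt_of_le_of_ne hxle hxm, hxi⟩
      have hmY : m ∉ Finset.Iio m \ {i} := by simp
      have hiY : i ∉ Finset.Iio m \ {i} := by simp
      have hdim := hfun_dim (s := s) hsub hXY hmY hiY hmi
      have e1 : insert m (Finset.Iio m \ {i}) = Finset.Iic m \ {i} := by
        ext x
        simp only [Finset.mem_insert, Finset.mem_sdiff, Finset.mem_Iio, Finset.mem_Iic,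
          Finset.mem_singleton]
        constructor
        · rintro (rfl | ⟨h1, h2⟩)
          · exact ⟨le_refl _, hmi⟩
          · exact ⟨le_of_lt h1, h2⟩
        · rintro ⟨h1, h2⟩
          rcases lt_or_eq_of_le h1 with h | h
          · exact Or.inr ⟨h, h2⟩
          · exact Or.inl h
      have e2 : insert m I' = I := Finset.insert_erase hmI
      rw [e1, e2] at hdim
      linarith

lemma bvec_mem_PB {f : Finset (Fin n) → ℕ} {i : Fin n} {s : ℤ}
    (hf0 : f ∅ = 0)
    (hmono : ∀ I J : Finset (Fin n), I ⊆ J → f I ≤ f J)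
    (hsub : ∀ I J : Finset (Fin n), f (I ∪ J) + f (I ∩ J) ≤ f I + f J)
    (hs0 : 0 ≤ s) (hs : s ≤ (f {i} : ℤ))
    (hg : (f (Finset.Iic i) : ℤ) - (f (Finset.Iio i) : ℤ) ≤ s) :
    bvec f i s ∈ PB n f := by
  refine mem_PB_iff.2 ⟨?_, ?_, ?_⟩
  · intro j
    by_cases hj : j = i
    · simpa [bvec, hj] using hs0
    · have : bvec f i s j
          = hfun f i s (Finset.Iic j \ {i}) - hfun f i s (Finset.Iio j \ {i}) := by
        simp [bvec, hj]
      rw [this]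
      have := hfun_mono (f := f) (i := i) (s := s) hmono
        (I := Finset.Iio j \ {i}) (J := Finset.Iic j \ {i})
        (Finset.sdiff_subset_sdiff Finset.Iio_subset_Iic_self (Finset.Subset.refl _))
      linarith
  · intro I
    by_cases hiI : i ∈ I
    · have hsplit : ∑ j ∈ I.erase i, bvec f i s j + bvec f i s i = ∑ j ∈ I, bvec f i s j :=
        Finset.sum_erase_add _ _ hiI
      have h1 : ∑ j ∈ I.erase i, bvec f i s j ≤ hfun f i s (I.erase i) :=
        sum_bvec_le hf0 hmono hsub hs _ (Finset.notMem_erase i I)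
      have h2 : hfun f i s (I.erase i) ≤ (f (I.erase i ∪ {i}) : ℤ) - s := min_le_right _ _
      have e : I.erase i ∪ {i} = I := by
        ext x
        simp only [Finset.mem_union, Finset.mem_erase, Finset.mem_singleton]
        constructor
        · rintro (⟨-, h⟩ | rfl)
          · exact h
          · exact hiI
        · intro h
          rcases eq_or_ne x i with rfl | hx
          · exact Or.inr rfl
          · exact Or.inl ⟨hx, h⟩
      rw [e] at h2
      rw [bvec_apply_i] at hsplit
      linarith
    · have h1 : ∑ j ∈ I, bvec f i s j ≤ hfun f i s I := sum_bvec_le hf0 hmono hsub hs _ hiI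
      have h2 : hfun f i s I ≤ (f I : ℤ) := min_le_left _ _
      linarith
  · have hsplit : ∑ j ∈ Finset.univ.erase i, bvec f i s j + bvec f i s i
        = ∑ j, bvec f i s j := Finset.sum_erase_add _ _ (Finset.mem_univ i)
    have e0 : (Finset.univ.erase i : Finset (Fin n)) = Pre n n \ {i} := by
      rw [Pre_univ, Finset.sdiff_singleton_eq_erase]
    have hpre := sum_bvec_pre (i := i) (s := s) hf0 hs n
    rw [← e0] at hpre
    -- hfun (univ.erase i) = f univ - s
    have e1 : (Finset.univ.erase i : Finset (Fin n)) ∪ {i} = Finset.univ := by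
      ext x
      simp only [Finset.mem_union, Finset.mem_erase, Finset.mem_univ,
        Finset.mem_singleton, and_true, true_and, iff_true]
      tauto
    have e2 : (Finset.univ.erase i : Finset (Fin n)) ∩ Finset.Iic i = Finset.Iio i := by
      ext x
      simp only [Finset.mem_inter, Finset.mem_erase, Finset.mem_univ, and_true,
        Finset.mem_Iic, Finset.mem_Iio, true_and]
      constructor
      · rintro ⟨h1, h2⟩; exact lt_of_le_of_ne h2 h1
      · intro h; exact ⟨ne_of_lt h, le_of_lt h⟩
    have e3 : (Finset.univ.erase i : Finset (Fin n)) ∪ Finset.Iic i = Finset.univ := by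
      ext x; simp only [Finset.mem_union, Finset.mem_erase, Finset.mem_univ,
        Finset.mem_Iic, true_and, iff_true]
      rcases eq_or_ne x i with rfl | h
      · exact Or.inr (le_refl _)
      · exact Or.inl ⟨h, trivial⟩
    have hsub' := hsub (Finset.univ.erase i) (Finset.Iic i)
    rw [e3, e2] at hsub'
    have hsub'' : (f Finset.univ : ℤ) + (f (Finset.Iio i) : ℤ)
        ≤ (f (Finset.univ.erase i) : ℤ) + (f (Finset.Iic i) : ℤ) := by exact_mod_cast hsub'
    have hle : (f Finset.univ : ℤ) - s ≤ (f (Finset.univ.erase i) : ℤ) := by linarith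
    have hval : hfun f i s (Finset.univ.erase i) = (f Finset.univ : ℤ) - s := by
      rw [hfun, e1]
      exact min_eq_right hle
    rw [hpre, hval, bvec_apply_i] at hsplit
    linarith

lemma not_mem_PB_of_tight {f : Finset (Fin n) → ℕ} {b : Fin n → ℤ} {S : Finset (Fin n)}
    {j k : Fin n} (ht : ∑ x ∈ S, b x = (f S : ℤ)) (hk : k ∈ S) (hj : j ∉ S) :
    b - Pi.single j 1 + Pi.single k 1 ∉ PB n f := by
  intro hc
  have h := (mem_PB_iff.1 hc).2.1 S
  have hsplit : ∑ x ∈ S, ((b - Pi.single j 1 + Pi.single k 1 : Fin n → ℤ)) x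
      = ∑ x ∈ S, b x - (if j ∈ S then 1 else 0) + (if k ∈ S then 1 else 0) := by
    simp only [Pi.add_apply, Pi.sub_apply, Finset.sum_add_distrib, Finset.sum_sub_distrib,
      pbSum_single_ite]
  rw [hsplit, ht, if_pos hk, if_neg hj] at h
  linarith

lemma sum_bvec_Iic {f : Finset (Fin n) → ℕ} {i : Fin n} {s : ℤ}
    (hf0 : f ∅ = 0) (hs : s ≤ (f {i} : ℤ)) (m : Fin n) :
    ∑ j ∈ Finset.Iic m \ {i}, bvec f i s j = hfun f i s (Finset.Iic m \ {i}) := by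
  rw [Iic_eq_Pre]
  exact sum_bvec_pre hf0 hs (m.val + 1)

lemma Iic_sdiff_self {i : Fin n} : Finset.Iic i \ {i} = Finset.Iio i := by
  ext x
  simp only [Finset.mem_sdiff, Finset.mem_Iic, Finset.mem_Iio, Finset.mem_singleton,
    Fin.le_def, Fin.lt_def, Fin.ext_iff]
  omega

lemma sum_bvec_Iic_full {f : Finset (Fin n) → ℕ} {i : Fin n} {s : ℤ}
    (hf0 : f ∅ = 0) (hs : s ≤ (f {i} : ℤ)) :
    ∑ j ∈ Finset.Iic i, bvec f i s j = hfun f i s (Finset.Iio i) + s := by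
  have h1 : ∑ j ∈ (Finset.Iic i).erase i, bvec f i s j + bvec f i s i
      = ∑ j ∈ Finset.Iic i, bvec f i s j :=
    Finset.sum_erase_add _ _ (Finset.mem_Iic.2 (le_refl i))
  rw [← Finset.sdiff_singleton_eq_erase, Iic_sdiff_self] at h1
  have h2 : ∑ j ∈ Finset.Iio i, bvec f i s j = hfun f i s (Finset.Iio i) := by
    have := sum_bvec_Iic hf0 hs i
    rwa [Iic_sdiff_self] at this
  rw [← h1, h2, bvec_apply_i]

lemma hfun_Iio_self {f : Finset (Fin n) → ℕ} {i : Fin n} {s : ℤ}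
    (hg : (f (Finset.Iic i) : ℤ) - (f (Finset.Iio i) : ℤ) ≤ s) :
    hfun f i s (Finset.Iio i) = (f (Finset.Iic i) : ℤ) - s := by
  have e : Finset.Iio i ∪ {i} = Finset.Iic i := by
    ext x
    simp only [Finset.mem_union, Finset.mem_Iio, Finset.mem_Iic, Finset.mem_singleton,
      Fin.le_def, Fin.lt_def, Fin.ext_iff]
    omega
  rw [hfun, e]
  exact min_eq_right (by linarith)

/-- All indices other than `i` are internally active for `bvec f i s`. -/
lemma bvec_act {f : Finset (Fin n) → ℕ} {i : Fin n} {s : ℤ}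
    (hf0 : f ∅ = 0) (hs : s ≤ (f {i} : ℤ))
    (hg : (f (Finset.Iic i) : ℤ) - (f (Finset.Iio i) : ℤ) ≤ s) :
    ∀ j, j ≠ i → IntAct f (bvec f i s) j := by
  intro j hji k hkj
  by_cases hki : k = i
  · -- move to i : Iic i is tight
    have ht : ∑ x ∈ Finset.Iic i, bvec f i s x = (f (Finset.Iic i) : ℤ) := by
      rw [sum_bvec_Iic_full hf0 hs, hfun_Iio_self hg]; ring
    rw [hki]
    rw [hki] at hkj
    exact not_mem_PB_of_tight ht (Finset.mem_Iic.2 (le_refl i))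
      (fun hj => absurd (Finset.mem_Iic.1 hj) (not_le_of_gt hkj))
  · set P := Finset.Iic k \ {i} with hP
    have hkP : k ∈ P := by
      simp only [hP, Finset.mem_sdiff, Finset.mem_Iic, Finset.mem_singleton]
      exact ⟨le_refl _, hki⟩
    have hjP : j ∉ P := by
      simp only [hP, Finset.mem_sdiff, Finset.mem_Iic, Finset.mem_singleton]
      rintro ⟨h, -⟩
      exact absurd h (not_le_of_gt hkj)
    have hsumP : ∑ x ∈ P, bvec f i s x = hfun f i s P := sum_bvec_Iic hf0 hs k
    rcases le_or_gt (f P : ℤ) ((f (P ∪ {i}) : ℤ) - s) with hmin | hmin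
    · have ht : ∑ x ∈ P, bvec f i s x = (f P : ℤ) := by
        rw [hsumP, hfun]; exact min_eq_left hmin
      exact not_mem_PB_of_tight ht hkP hjP
    · have hiP : i ∉ P := by simp [hP]
      have eS : P ∪ {i} = insert i P := by rw [Finset.insert_eq, Finset.union_comm]
      have ht : ∑ x ∈ P ∪ {i}, bvec f i s x = (f (P ∪ {i}) : ℤ) := by
        rw [eS, Finset.sum_insert hiP, bvec_apply_i, hsumP, hfun,
          min_eq_right (le_of_lt hmin), ← eS]
        ring
      have hkS : k ∈ P ∪ {i} := Finset.mem_union_left _ hkP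
      have hjS : j ∉ P ∪ {i} := by
        simp only [Finset.mem_union, Finset.mem_singleton]
        rintro (h | h)
        · exact hjP h
        · exact hji h
      exact not_mem_PB_of_tight ht hkS hjS

/-- Union of tight sets avoiding `i` and covering `K`. -/
lemma tight_cover {f : Finset (Fin n) → ℕ}
    (hf0 : f ∅ = 0)
    (hsub : ∀ I J : Finset (Fin n), f (I ∪ J) + f (I ∩ J) ≤ f I + f J)
    {b : Fin n → ℤ} (hb : b ∈ PB n f) {i : Fin n} (K : Finset (Fin n))
    (hK : ∀ k ∈ K, ∃ S : Finset (Fin n), (∑ x ∈ S, b x = (f S : ℤ)) ∧ k ∈ S ∧ i ∉ S) :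
    ∃ T : Finset (Fin n), (∑ x ∈ T, b x = (f T : ℤ)) ∧ K ⊆ T ∧ i ∉ T := by
  induction K using Finset.induction_on with
  | empty => exact ⟨∅, by simp [hf0], Finset.empty_subset _, Finset.notMem_empty _⟩
  | insert k K hnotmem ih =>
    obtain ⟨T, hT, hKT, hiT⟩ := ih (fun x hx => hK x (Finset.mem_insert_of_mem hx))
    obtain ⟨S, hS, hkS, hiS⟩ := hK k (Finset.mem_insert_self k K)
    refine ⟨T ∪ S, (tight_union hsub hb hT hS).1, ?_, ?_⟩
    · intro x hx
      rcases Finset.mem_insert.1 hx with rfl | hx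
      · exact Finset.mem_union_right _ hkS
      · exact Finset.mem_union_left _ (hKT hx)
    · simp only [Finset.mem_union]
      rintro (h | h)
      · exact hiT h
      · exact hiS h

/-- For `s > g`, the index `i` is not internally active for `bvec f i s`. -/
lemma bvec_not_act {f : Finset (Fin n) → ℕ} {i : Fin n} {s : ℤ}
    (hf0 : f ∅ = 0)
    (hmono : ∀ I J : Finset (Fin n), I ⊆ J → f I ≤ f J)
    (hsub : ∀ I J : Finset (Fin n), f (I ∪ J) + f (I ∩ J) ≤ f I + f J)
    (hs : s ≤ (f {i} : ℤ))
    (hg : (f (Finset.Iic i) : ℤ) - (f (Finset.Iio i) : ℤ) < s) :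
    ¬ IntAct f (bvec f i s) i := by
  intro hIA
  set b := bvec f i s with hbdef
  have hg0 : (0:ℤ) ≤ (f (Finset.Iic i) : ℤ) - (f (Finset.Iio i) : ℤ) := by
    have := hmono (Finset.Iio i) (Finset.Iic i) Finset.Iio_subset_Iic_self
    have : (f (Finset.Iio i) : ℤ) ≤ (f (Finset.Iic i) : ℤ) := by exact_mod_cast this
    linarith
  have hbPB : b ∈ PB n f := bvec_mem_PB hf0 hmono hsub (by linarith) hs (le_of_lt hg)
  obtain ⟨hb1, hb2, hb3⟩ := mem_PB_iff.1 hbPB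
  -- for each k < i there is a tight set containing k avoiding i
  have hK : ∀ k ∈ Finset.Iio i, ∃ S : Finset (Fin n),
      (∑ x ∈ S, b x = (f S : ℤ)) ∧ k ∈ S ∧ i ∉ S := by
    intro k hk
    have hki : k < i := Finset.mem_Iio.1 hk
    have hc := hIA k hki
    set c := b - Pi.single i 1 + Pi.single k 1 with hcdef
    have hceval : ∀ x, c x = b x - (if x = i then 1 else 0) + (if x = k then 1 else 0) := by
      intro x; simp [hcdef, Pi.single_apply]
    have hc1 : ∀ x, 0 ≤ c x := by
      intro x
      rw [hceval]
      by_cases hxi : x = i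
      · have hxk : x ≠ k := by
          intro h
          rw [hxi] at h
          rw [← h] at hki
          exact lt_irrefl i hki
        rw [if_pos hxi, if_neg hxk]
        have hbi : b x = s := by rw [hxi]; exact bvec_apply_i f i s
        rw [hbi]; linarith
      · rw [if_neg hxi]
        have := hb1 x
        split <;> linarith
    have hc3 : ∑ x, c x = (f Finset.univ : ℤ) := by
      have : ∑ x, c x = ∑ x, b x - (if i ∈ Finset.univ then 1 else 0)
          + (if k ∈ Finset.univ then (1:ℤ) else 0) := by
        simp only [hcdef, Pi.add_apply, Pi.sub_apply, Finset.sum_add_distrib,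
          Finset.sum_sub_distrib, pbSum_single_ite]
      simp only [Finset.mem_univ, if_pos] at this
      rw [this, hb3]; ring
    have : ¬ (∀ I : Finset (Fin n), ∑ x ∈ I, c x ≤ (f I : ℤ)) := by
      intro hall
      exact hc (mem_PB_iff.2 ⟨hc1, hall, hc3⟩)
    push_neg at this
    obtain ⟨S, hS⟩ := this
    have hsplitS : ∑ x ∈ S, c x = ∑ x ∈ S, b x - (if i ∈ S then 1 else 0)
        + (if k ∈ S then 1 else 0) := by
      simp only [hcdef, Pi.add_apply, Pi.sub_apply, Finset.sum_add_distrib,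
        Finset.sum_sub_distrib, pbSum_single_ite]
    rw [hsplitS] at hS
    have hbS := hb2 S
    by_cases hiS : i ∈ S
    · exfalso
      rw [if_pos hiS] at hS
      split at hS <;> linarith
    · by_cases hkS : k ∈ S
      · refine ⟨S, ?_, hkS, hiS⟩
        rw [if_neg hiS, if_pos hkS] at hS
        linarith
      · exfalso
        rw [if_neg hiS, if_neg hkS] at hS
        linarith
  obtain ⟨T, hTt, hTK, hiT⟩ := tight_cover hf0 hsub hbPB (Finset.Iio i) hK
  -- sum over T is at most f(T ∪ {i}) - s
  have h1 : ∑ x ∈ T, b x ≤ hfun f i s T := sum_bvec_le hf0 hmono hsub hs T hiT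
  have h2 : hfun f i s T ≤ (f (T ∪ {i}) : ℤ) - s := min_le_right _ _
  have e1 : T ∪ Finset.Iic i = T ∪ {i} := by
    ext x
    simp only [Finset.mem_union, Finset.mem_Iic, Finset.mem_singleton]
    constructor
    · rintro (h | h)
      · exact Or.inl h
      · rcases lt_or_eq_of_le h with h' | h'
        · exact Or.inl (hTK (Finset.mem_Iio.2 h'))
        · exact Or.inr h'
    · rintro (h | rfl)
      · exact Or.inl h
      · exact Or.inr (le_refl _)
  have e2 : T ∩ Finset.Iic i = Finset.Iio i := by
    ext x
    simp only [Finset.mem_inter, Finset.mem_Iic, Finset.mem_Iio]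
    constructor
    · rintro ⟨hxT, hxle⟩
      rcases lt_or_eq_of_le hxle with h' | rfl
      · exact h'
      · exact absurd hxT hiT
    · intro h
      exact ⟨hTK (Finset.mem_Iio.2 h), le_of_lt h⟩
  have hsub' := hsub T (Finset.Iic i)
  rw [e1, e2] at hsub'
  have hsub'' : (f (T ∪ {i}) : ℤ) + (f (Finset.Iio i) : ℤ)
      ≤ (f T : ℤ) + (f (Finset.Iic i) : ℤ) := by exact_mod_cast hsub'
  linarith

/-- At `s = g`, the index `i` is internally active for `bvec f i g`. -/
lemma bvec_act_at_g {f : Finset (Fin n) → ℕ} {i : Fin n}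
    (hf0 : f ∅ = 0)
    (hsub : ∀ I J : Finset (Fin n), f (I ∪ J) + f (I ∩ J) ≤ f I + f J) :
    IntAct f (bvec f i ((f (Finset.Iic i) : ℤ) - (f (Finset.Iio i) : ℤ))) i := by
  set s := (f (Finset.Iic i) : ℤ) - (f (Finset.Iio i) : ℤ) with hsdef
  intro k hki
  have hs : s ≤ (f {i} : ℤ) := by
    have h := hsub (Finset.Iio i) {i}
    have e1 : Finset.Iio i ∪ {i} = Finset.Iic i := by
      ext x
      simp only [Finset.mem_union, Finset.mem_Iio, Finset.mem_Iic, Finset.mem_singleton,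
        Fin.le_def, Fin.lt_def, Fin.ext_iff]
      omega
    have e2 : Finset.Iio i ∩ {i} = ∅ := by
      ext x
      simp only [Finset.mem_inter, Finset.mem_Iio, Finset.mem_singleton,
        Finset.notMem_empty, iff_false, Fin.lt_def, Fin.ext_iff, not_and]
      omega
    rw [e1, e2, hf0] at h
    have : (f (Finset.Iic i) : ℤ) ≤ (f (Finset.Iio i) : ℤ) + (f {i} : ℤ) := by
      exact_mod_cast h
    linarith
  -- Iic k is tight
  have hiIick : i ∉ Finset.Iic k := fun h =>
    absurd (Finset.mem_Iic.1 h) (not_le_of_gt hki)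
  have hIick : Finset.Iic k \ {i} = Finset.Iic k := Finset.sdiff_eq_self_of_disjoint
    (Finset.disjoint_singleton_right.2 hiIick)
  have hsum : ∑ x ∈ Finset.Iic k, bvec f i s x = hfun f i s (Finset.Iic k) := by
    have := sum_bvec_Iic (i := i) (s := s) hf0 hs k
    rwa [hIick] at this
  -- hfun (Iic k) = f (Iic k)
  have hmin : (f (Finset.Iic k) : ℤ) ≤ (f (Finset.Iic k ∪ {i}) : ℤ) - s := by
    have h := hsub (Finset.Iic k ∪ {i}) (Finset.Iio i)
    have e1 : (Finset.Iic k ∪ {i}) ∪ Finset.Iio i = Finset.Iic i := by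
      ext x
      simp only [Finset.mem_union, Finset.mem_Iic, Finset.mem_Iio, Finset.mem_singleton,
        Fin.le_def, Fin.lt_def, Fin.ext_iff]
      have := hki
      rw [Fin.lt_def] at this
      omega
    have e2 : (Finset.Iic k ∪ {i}) ∩ Finset.Iio i = Finset.Iic k := by
      ext x
      simp only [Finset.mem_inter, Finset.mem_union, Finset.mem_Iic, Finset.mem_Iio,
        Finset.mem_singleton, Fin.le_def, Fin.lt_def, Fin.ext_iff]
      have := hki
      rw [Fin.lt_def] at this
      omega
    rw [e1, e2] at h
    have h' : (f (Finset.Iic i) : ℤ) + (f (Finset.Iic k) : ℤ)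
        ≤ (f (Finset.Iic k ∪ {i}) : ℤ) + (f (Finset.Iio i) : ℤ) := by exact_mod_cast h
    linarith
  have ht : ∑ x ∈ Finset.Iic k, bvec f i s x = (f (Finset.Iic k) : ℤ) := by
    rw [hsum, hfun]
    exact min_eq_left hmin
  exact not_mem_PB_of_tight ht (Finset.mem_Iic.2 (le_refl k)) hiIick

open scoped Classical in
/-- The number of bases whose set of internally active indices is exactly
`[n] ∖ {i}` equals `f({i}) - (f([i]) - f([i-1]))`. -/
theorem count_intSet_compl_singleton
    (n : ℕ) (hn : 0 < n) (f : Finset (Fin n) → ℕ)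
    (hf0 : f ∅ = 0)
    (hmono : ∀ I J : Finset (Fin n), I ⊆ J → f I ≤ f J)
    (hsub : ∀ I J : Finset (Fin n), f (I ∪ J) + f (I ∩ J) ≤ f I + f J)
    (i : Fin n) :
    (((PB n f).filter fun a => IntSet f a = Finset.univ \ {i}).card : ℤ) =
      (f {i} : ℤ) - ((f (Finset.Iic i) : ℤ) - (f (Finset.Iio i) : ℤ)) := by
  set g : ℤ := (f (Finset.Iic i) : ℤ) - (f (Finset.Iio i) : ℤ) with hgdef
  have hg0 : 0 ≤ g := by
    have h := hmono (Finset.Iio i) (Finset.Iic i) Finset.Iio_subset_Iic_self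
    have : (f (Finset.Iio i) : ℤ) ≤ (f (Finset.Iic i) : ℤ) := by exact_mod_cast h
    rw [hgdef]; linarith
  have hgfi : g ≤ (f {i} : ℤ) := by
    have h := hsub (Finset.Iio i) {i}
    have e1 : Finset.Iio i ∪ {i} = Finset.Iic i := by
      ext x
      simp only [Finset.mem_union, Finset.mem_Iio, Finset.mem_Iic, Finset.mem_singleton,
        Fin.le_def, Fin.lt_def, Fin.ext_iff]
      omega
    have e2 : Finset.Iio i ∩ {i} = ∅ := by
      ext x
      simp only [Finset.mem_inter, Finset.mem_Iio, Finset.mem_singleton,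
        Finset.notMem_empty, iff_false, Fin.lt_def, Fin.ext_iff, not_and]
      omega
    rw [e1, e2, hf0] at h
    have : (f (Finset.Iic i) : ℤ) ≤ (f (Finset.Iio i) : ℤ) + (f {i} : ℤ) := by
      exact_mod_cast h
    rw [hgdef]; linarith
  have hmemInt : ∀ (a : Fin n → ℤ) (j : Fin n), j ∈ IntSet f a ↔ IntAct f a j := by
    intro a j
    simp [IntSet]
  have hcard : ((PB n f).filter fun a => IntSet f a = Finset.univ \ {i}).card
      = (Finset.Ioc g ((f {i} : ℤ))).card := by
    apply Finset.card_bij (fun a _ => a i)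
    · -- maps into Ioc
      intro a ha
      obtain ⟨haPB, hInt⟩ := Finset.mem_filter.1 ha
      have hact : ∀ j, j ≠ i → IntAct f a j := by
        intro j hj
        refine (hmemInt a j).1 ?_
        rw [hInt]
        simp [hj]
      have hnact : ¬ IntAct f a i := by
        intro h
        have := (hmemInt a i).2 h
        rw [hInt] at this
        simp at this
      have hub : a i ≤ (f {i} : ℤ) := by
        have := (mem_PB_iff.1 haPB).2.1 {i}
        simpa using this
      refine Finset.mem_Ioc.2 ⟨?_, hub⟩
      by_contra hcon
      push_neg at hcon
      -- a i ≤ g : compare with bvec f i g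
      have hbbPB : bvec f i g ∈ PB n f := bvec_mem_PB hf0 hmono hsub hg0 hgfi (le_refl g)
      have hbbact : ∀ j, j ≠ i → IntAct f (bvec f i g) j := bvec_act hf0 hgfi (le_refl g)
      have hbi : IntAct f (bvec f i g) i := by
        rw [hgdef]
        exact bvec_act_at_g hf0 hsub
      have heq : a = bvec f i g :=
        eq_of_active hsub haPB hbbPB hact hbbact
          (by rw [bvec_apply_i]; exact hcon) (Or.inl hbi)
      rw [heq] at hnact
      exact hnact hbi
    · -- injective
      intro a ha a' ha' hii
      obtain ⟨haPB, hInt⟩ := Finset.mem_filter.1 ha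
      obtain ⟨haPB', hInt'⟩ := Finset.mem_filter.1 ha'
      have hact : ∀ j, j ≠ i → IntAct f a j := by
        intro j hj
        refine (hmemInt a j).1 ?_
        rw [hInt]; simp [hj]
      have hact' : ∀ j, j ≠ i → IntAct f a' j := by
        intro j hj
        refine (hmemInt a' j).1 ?_
        rw [hInt']; simp [hj]
      exact eq_of_active hsub haPB haPB' hact hact' (le_of_eq hii) (Or.inr hii)
    · -- surjective
      intro s hs
      obtain ⟨hs1, hs2⟩ := Finset.mem_Ioc.1 hs
      have hbbPB : bvec f i s ∈ PB n f :=
        bvec_mem_PB hf0 hmono hsub (by linarith) hs2 (le_of_lt hs1)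
      have hIntSet : IntSet f (bvec f i s) = Finset.univ \ {i} := by
        ext j
        rw [hmemInt]
        simp only [Finset.mem_sdiff, Finset.mem_univ, Finset.mem_singleton, true_and]
        constructor
        · intro hj hji
          rw [hji] at hj
          exact bvec_not_act hf0 hmono hsub hs2 hs1 hj
        · exact fun hj => bvec_act hf0 hs2 (le_of_lt hs1) j hj
      exact ⟨bvec f i s, Finset.mem_filter.2 ⟨hbbPB, hIntSet⟩, bvec_apply_i f i s⟩
  rw [hcard]
  have : ((Finset.Ioc g ((f {i} : ℤ))).card : ℤ) = (f {i} : ℤ) - g := by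
    rw [Int.card_Ioc]
    exact Int.toNat_of_nonneg (by linarith)
  rw [this]
end
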